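/- arXiv:2111.05296 — 6 statements merged into one kernel-verified Lean document; each statement's English description precedes it below -/
import Mathlib

section
/- Suppose a > 0 and b > 0. Then the matrix Â = [[−a L̂, b I], [−L̂, 0]] ∈ ℝ^{2(n−1)×2(n−1)} is Hurwitz: every eigenvalue of Â, regarded as a matrix over ℂ, has strictly negative real part. -/
open Matrix MeasureTheory Filter Topology
open ComplexOrder

private lemma mapC_mul {k l o : Type*} [Fintype l] (M : Matrix k l ℝ) (N : Matrix l o ℝ) :
    (M * N).map Complex.ofReal = M.map Complex.ofReal * N.map Complex.ofReal := by
  ext i j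
  simp [Matrix.mul_apply, Matrix.map_apply]

private lemma hurwitz_arith {a b dr sr p q : ℝ} (ha : 0 < a) (hb : 0 < b)
    (hdr : 0 < dr) (hsr : 0 < sr)
    (hre : (a * p + b) * dr = -((p * p - q * q) * sr))
    (him : a * q * dr = -((p * q + q * p) * sr)) : p < 0 := by
  by_contra hp
  push_neg at hp
  have hq : q = 0 := by
    by_contra hq
    have hfac : 0 < a * dr + 2 * p * sr := by
      nlinarith [mul_pos ha hdr, mul_nonneg hp hsr.le]
    have h0 : q * (a * dr + 2 * p * sr) = 0 := by linear_combination him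
    rcases mul_eq_zero.mp h0 with h | h
    · exact hq h
    · exact absurd h hfac.ne'
  subst hq
  nlinarith [hre, mul_nonneg (mul_nonneg ha.le hp) hdr.le, mul_pos hb hdr,
    mul_nonneg (mul_nonneg hp hp) hsr.le]

theorem stmt0
    (n m : ℕ) (hn : 2 ≤ n)
    (G : SimpleGraph (Fin n)) (hG : G.Connected)
    (src tgt : Fin m → Fin n)
    (hadj : ∀ l, G.Adj (src l) (tgt l))
    (hinj : ∀ l l' : Fin m, s(src l, tgt l) = s(src l', tgt l') → l = l')
    (hsurj : ∀ e ∈ G.edgeSet, ∃ l : Fin m, s(src l, tgt l) = e)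
    (B : Matrix (Fin n) (Fin m) ℝ)
    (hB : ∀ i l, B i l = if i = src l then (1 : ℝ) else if i = tgt l then -1 else 0)
    (L : Matrix (Fin n) (Fin n) ℝ) (hL : L = B * Bᵀ)
    (U1 : Matrix (Fin n) (Fin (n - 1)) ℝ)
    (hU1 : U1ᵀ * U1 = 1)
    (hU1one : U1ᵀ *ᵥ (fun _ => (1 : ℝ)) = 0)
    (Lhat : Matrix (Fin (n - 1)) (Fin (n - 1)) ℝ) (hLhat : Lhat = U1ᵀ * L * U1)
    (a b : ℝ) (ha : 0 < a) (hb : 0 < b)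
    (Ahat : Matrix (Fin (n - 1) ⊕ Fin (n - 1)) (Fin (n - 1) ⊕ Fin (n - 1)) ℝ)
    (hAhat : Ahat = Matrix.fromBlocks (-(a • Lhat)) (b • (1 : Matrix (Fin (n - 1)) (Fin (n - 1)) ℝ)) (-Lhat) 0)
    :
    ∀ μ : ℂ, μ ∈ spectrum ℂ (Ahat.map Complex.ofReal) → μ.re < 0 := by
  intro μ hμ
  -- eigenvector
  rw [spectrum.mem_iff] at hμ
  have hdet : ((algebraMap ℂ (Matrix (Fin (n-1) ⊕ Fin (n-1)) (Fin (n-1) ⊕ Fin (n-1)) ℂ)) μ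
      - Ahat.map Complex.ofReal).det = 0 := by
    by_contra h
    exact hμ ((Matrix.isUnit_iff_isUnit_det _).mpr (Ne.isUnit h))
  obtain ⟨v, hv, hv0⟩ := Matrix.exists_mulVec_eq_zero_iff.mpr hdet
  have heig : (Ahat.map Complex.ofReal) *ᵥ v = μ • v := by
    have h1 : (algebraMap ℂ (Matrix (Fin (n-1) ⊕ Fin (n-1)) (Fin (n-1) ⊕ Fin (n-1)) ℂ)) μ *ᵥ v
        = μ • v := by
      rw [Algebra.algebraMap_eq_smul_one, smul_mulVec, one_mulVec]
    rw [sub_mulVec, h1, sub_eq_zero] at hv0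
    exact hv0.symm
  -- notation
  set C : Matrix (Fin m) (Fin (n-1)) ℂ := (Bᵀ * U1).map Complex.ofReal with hC
  set Lhat' : Matrix (Fin (n-1)) (Fin (n-1)) ℂ := Lhat.map Complex.ofReal with hLhat'
  have hCH : Cᴴ = (U1ᵀ * B).map Complex.ofReal := by
    ext i j
    simp [hC, Matrix.conjTranspose_apply, Matrix.map_apply, Matrix.mul_apply,
      Complex.conj_ofReal, mul_comm]
  have hfact : Lhat' = Cᴴ * C := by
    rw [hCH, hC, ← mapC_mul, hLhat', hLhat, hL]
    simp [Matrix.mul_assoc]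
  -- kernel of C is trivial
  have hker : ∀ z : Fin (n-1) → ℂ, C *ᵥ z = 0 → z = 0 := by
    intro z hz
    set w : Fin n → ℂ := (U1.map Complex.ofReal) *ᵥ z with hwdef
    have hw : (Bᵀ.map Complex.ofReal) *ᵥ w = 0 := by
      rw [hwdef, mulVec_mulVec, ← mapC_mul, ← hC]
      exact hz
    have hBw : ∀ l, w (src l) = w (tgt l) := by
      intro l
      have h0 := congrFun hw l
      have hne : src l ≠ tgt l := (hadj l).ne
      have heq : (Bᵀ.map Complex.ofReal *ᵥ w) l = w (src l) - w (tgt l) := by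
        simp only [Matrix.mulVec, dotProduct, Matrix.map_apply, Matrix.transpose_apply, hB]
        rw [Finset.sum_congr rfl (fun i _ => show
            ((if i = src l then (1:ℝ) else if i = tgt l then -1 else 0 : ℝ) : ℂ) * w i
            = (if i = src l then w i else 0) + (if i = tgt l then -(w i) else 0) by
          by_cases h1 : i = src l
          · subst h1; simp [hne]
          · by_cases h2 : i = tgt l <;> simp [h1, h2, Ne.symm hne])]
        rw [Finset.sum_add_distrib]
        simp [sub_eq_add_neg]
      rw [heq] at h0
      simpa [sub_eq_zero] using h0
    have hwadj : ∀ i j : Fin n, G.Adj i j → w i = w j := by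
      intro i j hij
      obtain ⟨l, hl⟩ := hsurj s(i, j) (G.mem_edgeSet.mpr hij)
      rw [Sym2.eq_iff] at hl
      rcases hl with ⟨h1, h2⟩ | ⟨h1, h2⟩
      · rw [← h1, ← h2]; exact hBw l
      · rw [← h1, ← h2]; exact (hBw l).symm
    have hwconst : ∀ i j : Fin n, w i = w j := by
      intro i j
      obtain ⟨p⟩ := hG.preconnected i j
      induction p with
      | nil => rfl
      | cons h p ih => exact (hwadj _ _ h).trans ih
    have hn0 : (0:ℕ) < n := by omega
    set c : ℂ := w ⟨0, hn0⟩ with hc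
    have hwc : w = fun _ => c := funext fun i => hwconst i ⟨0, hn0⟩
    have hz' : z = (U1ᵀ.map Complex.ofReal) *ᵥ w := by
      rw [hwdef, mulVec_mulVec, ← mapC_mul, hU1]
      have : ((1 : Matrix (Fin (n-1)) (Fin (n-1)) ℝ)).map Complex.ofReal = 1 := by
        ext i j; simp [Matrix.map_apply, Matrix.one_apply, apply_ite]
      rw [this, one_mulVec]
    have hone : (U1ᵀ.map Complex.ofReal) *ᵥ (fun _ => (1:ℂ)) = 0 := by
      funext i
      have h0 := congrFun hU1one i
      simp only [Matrix.mulVec, dotProduct, Matrix.map_apply, mul_one,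
        Pi.zero_apply] at h0 ⊢
      rw [← Complex.ofReal_sum, h0, Complex.ofReal_zero]
    rw [hz', hwc, show (fun _ : Fin n => c) = c • (fun _ : Fin n => (1:ℂ)) by funext; simp,
      mulVec_smul, hone, smul_zero]
  -- block equations
  have hA'eq : Ahat.map Complex.ofReal
      = Matrix.fromBlocks (-((a:ℂ) • Lhat')) ((b:ℂ) • (1 : Matrix (Fin (n-1)) (Fin (n-1)) ℂ))
        (-Lhat') 0 := by
    have m1 : (-(a • Lhat)).map Complex.ofReal = -((a:ℂ) • Lhat') := by
      ext i j
      simp [Matrix.map_apply, hLhat', Matrix.neg_apply, Matrix.smul_apply, smul_eq_mul]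
    have m2 : ((b • (1 : Matrix (Fin (n-1)) (Fin (n-1)) ℝ))).map Complex.ofReal
        = (b:ℂ) • (1 : Matrix (Fin (n-1)) (Fin (n-1)) ℂ) := by
      ext i j
      by_cases h : i = j <;> simp [Matrix.map_apply, Matrix.smul_apply, Matrix.one_apply, h]
    have m3 : (-Lhat).map Complex.ofReal = -Lhat' := by
      ext i j
      simp [Matrix.map_apply, hLhat', Matrix.neg_apply]
    have m4 : ((0 : Matrix (Fin (n-1)) (Fin (n-1)) ℝ)).map Complex.ofReal = 0 := by
      ext i j
      simp [Matrix.map_apply]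
    rw [hAhat, Matrix.fromBlocks_map, m1, m2, m3, m4]
  set x : Fin (n-1) → ℂ := v ∘ Sum.inl with hx
  set y : Fin (n-1) → ℂ := v ∘ Sum.inr with hy
  have hv' : v = Sum.elim x y := by funext s; cases s <;> rfl
  rw [hv', hA'eq, Matrix.fromBlocks_mulVec] at heig
  have eq1 : (-((a:ℂ) • Lhat')) *ᵥ x + ((b:ℂ) • (1 : Matrix (Fin (n-1)) (Fin (n-1)) ℂ)) *ᵥ y
      = μ • x := funext fun i => congrFun heig (Sum.inl i)
  have eq2 : (-Lhat') *ᵥ x + (0 : Matrix (Fin (n-1)) (Fin (n-1)) ℂ) *ᵥ y = μ • y :=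
    funext fun i => congrFun heig (Sum.inr i)
  rw [neg_mulVec, smul_mulVec, smul_mulVec, one_mulVec] at eq1
  rw [neg_mulVec, zero_mulVec, add_zero] at eq2
  have hLx : Lhat' *ᵥ x = -(μ • y) := neg_eq_iff_eq_neg.mp eq2
  have eqA : ((a:ℂ) * μ + (b:ℂ)) • y = μ • x := by
    rw [hLx] at eq1
    rw [add_smul, mul_smul]
    simpa [smul_neg, neg_neg] using eq1
  -- case μ = 0
  by_cases hμ0 : μ = 0
  · exfalso
    subst hμ0
    have hx0 : x = 0 := by
      have h1 : Lhat' *ᵥ x = 0 := by rw [hLx]; simp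
      exact hker x ((Matrix.conjTranspose_mul_self_mulVec_eq_zero C x).mp
        (by rw [← hfact]; exact h1))
    have hy0 : y = 0 := by
      have hb' : ((a:ℂ) * 0 + (b:ℂ)) ≠ 0 := by
        simp [Complex.ofReal_ne_zero, hb.ne']
      have := eqA
      rw [zero_smul] at this
      rcases smul_eq_zero.mp this with h | h
      · exact absurd h hb'
      · exact h
    exact hv (by rw [hv', hx0, hy0]; funext s; cases s <;> rfl)
  -- case aμ + b = 0
  by_cases hab : (a:ℂ) * μ + (b:ℂ) = 0
  · have hre := congrArg Complex.re hab
    simp [Complex.add_re, Complex.mul_re] at hre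
    nlinarith [hre, ha, hb, mul_pos ha hb]
  -- main case
  · have hxne : x ≠ 0 := by
      intro h
      have : y = 0 := by
        have := eqA
        rw [h, smul_zero] at this
        rcases smul_eq_zero.mp this with h' | h'
        · exact absurd h' hab
        · exact h'
      exact hv (by rw [hv', h, this]; funext s; cases s <;> rfl)
    set u : Fin m → ℂ := C *ᵥ x with hu
    have hune : u ≠ 0 := fun h => hxne (hker x h)
    set d : ℂ := star u ⬝ᵥ u with hd
    set s : ℂ := star x ⬝ᵥ x with hs
    have hdd : star x ⬝ᵥ (Lhat' *ᵥ x) = d := by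
      rw [hfact, ← mulVec_mulVec, Matrix.dotProduct_mulVec, ← Matrix.star_mulVec, hd, hu]
    -- positivity facts
    have hd0 : (0:ℂ) ≤ d := dotProduct_star_self_nonneg u
    have hs0 : (0:ℂ) ≤ s := dotProduct_star_self_nonneg x
    have hdne : d ≠ 0 := fun h => hune (dotProduct_star_self_eq_zero.mp h)
    have hsne : s ≠ 0 := fun h => hxne (dotProduct_star_self_eq_zero.mp h)
    obtain ⟨hdre, hdim⟩ := Complex.le_def.mp hd0
    obtain ⟨hsre, hsim⟩ := Complex.le_def.mp hs0
    simp only [Complex.zero_re, Complex.zero_im] at hdre hdim hsre hsim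
    have hdrpos : 0 < d.re := lt_of_le_of_ne hdre (fun h => hdne (Complex.ext h.symm hdim.symm))
    have hsrpos : 0 < s.re := lt_of_le_of_ne hsre (fun h => hsne (Complex.ext h.symm hsim.symm))
    -- key identity
    have hvec : ((a:ℂ) * μ + (b:ℂ)) • (Lhat' *ᵥ x) = -((μ * μ) • x) := by
      rw [hLx, smul_neg, smul_comm, eqA, smul_smul]
    have key : ((a:ℂ) * μ + (b:ℂ)) * d = -((μ * μ) * s) := by
      calc ((a:ℂ) * μ + (b:ℂ)) * d
          = star x ⬝ᵥ (((a:ℂ) * μ + (b:ℂ)) • (Lhat' *ᵥ x)) := by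
            rw [dotProduct_smul, smul_eq_mul, hdd]
        _ = star x ⬝ᵥ (-((μ * μ) • x)) := by rw [hvec]
        _ = -((μ * μ) * s) := by
            rw [dotProduct_neg, dotProduct_smul, smul_eq_mul, hs]
    -- take real and imaginary parts
    have hre := congrArg Complex.re key
    have him := congrArg Complex.im key
    simp only [Complex.mul_re, Complex.mul_im, Complex.add_re, Complex.add_im, Complex.neg_re,
      Complex.neg_im, Complex.ofReal_re, Complex.ofReal_im, ← hdim, ← hsim, mul_zero, zero_mul,
      sub_zero, add_zero, zero_add] at hre him
    exact hurwitz_arith ha hb hdrpos hsrpos hre him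
end

section
/- The function t ↦ ‖δ(t)‖² is integrable on (0, ∞) and ∫₀^∞ ‖δ(t)‖² dt = (1/(2ab)) (ω^u)ᵀ L† ω^u. -/
open Matrix MeasureTheory Filter Topology


lemma dotSelf_nonneg {n : ℕ} (x : Fin n → ℝ) : 0 ≤ x ⬝ᵥ x :=
  Finset.sum_nonneg fun i _ => mul_self_nonneg _

lemma dot_mulVec_transfer {n m : ℕ} (M : Matrix (Fin n) (Fin m) ℝ) (x : Fin n → ℝ) (y : Fin m → ℝ) :
    x ⬝ᵥ (M *ᵥ y) = (Mᵀ *ᵥ x) ⬝ᵥ y := by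
  simp only [dotProduct, Matrix.mulVec, Matrix.transpose_apply, Finset.mul_sum, Finset.sum_mul]
  rw [Finset.sum_comm]
  congr 1; ext i; congr 1; ext j; ring

lemma hasDerivAt_mulVec {n m : ℕ} (M : Matrix (Fin m) (Fin n) ℝ) {f : ℝ → Fin n → ℝ}
    {f' : Fin n → ℝ} {t : ℝ} (hf : HasDerivAt f f' t) :
    HasDerivAt (fun s => M *ᵥ f s) (M *ᵥ f') t := by
  rw [hasDerivAt_pi] at hf ⊢
  intro i
  simp only [Matrix.mulVec, dotProduct]
  exact HasDerivAt.fun_sum fun j _ => (hf j).const_mul (M i j)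

lemma hasDerivAt_dot {n : ℕ} {f g : ℝ → Fin n → ℝ} {f' g' : Fin n → ℝ} {t : ℝ}
    (hf : HasDerivAt f f' t) (hg : HasDerivAt g g' t) :
    HasDerivAt (fun s => f s ⬝ᵥ g s) (f' ⬝ᵥ g t + f t ⬝ᵥ g') t := by
  rw [hasDerivAt_pi] at hf hg
  simp only [dotProduct, ← Finset.sum_add_distrib]
  exact HasDerivAt.fun_sum fun i _ => (hf i).fun_mul (hg i)

lemma abs_dot_le_weighted {n : ℕ} (x y : Fin n → ℝ) {η : ℝ} (hη : 0 < η) :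
    |x ⬝ᵥ y| ≤ (x ⬝ᵥ x) / (2 * η) + η * (y ⬝ᵥ y) / 2 := by
  have h1 : ∀ i, |x i * y i| ≤ (x i)^2 / (2*η) + η * (y i)^2 / 2 := by
    intro i
    rw [abs_mul]
    have h2 : 0 ≤ (|x i| - η * |y i|)^2 := sq_nonneg _
    have hx2 : |x i|^2 = (x i)^2 := sq_abs _
    have hy2 : |y i|^2 = (y i)^2 := sq_abs _
    rw [div_add_div _ _ (by positivity) (by norm_num), le_div_iff₀ (by positivity)]
    have h3 : 0 ≤ x i ^ 2 - 2 * η * (|x i| * |y i|) + η ^ 2 * y i ^ 2 := by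
      have : (|x i| - η * |y i|)^2 = |x i|^2 - 2 * η * (|x i| * |y i|) + η^2 * |y i|^2 := by ring
      rw [this, hx2, hy2] at h2; exact h2
    nlinarith [h3]
  calc |x ⬝ᵥ y| ≤ ∑ i, |x i * y i| := Finset.abs_sum_le_sum_abs _ _
    _ ≤ ∑ i, ((x i)^2 / (2*η) + η * (y i)^2 / 2) := Finset.sum_le_sum fun i _ => h1 i
    _ = (x ⬝ᵥ x) / (2 * η) + η * (y ⬝ᵥ y) / 2 := by
        simp [dotProduct, Finset.sum_add_distrib, Finset.sum_div, Finset.mul_sum, sq]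

lemma abs_dot_mulVec_le {n : ℕ} (M : Matrix (Fin n) (Fin n) ℝ) (x y : Fin n → ℝ) :
    |x ⬝ᵥ (M *ᵥ y)| ≤ (∑ i, ∑ j, |M i j|) / 2 * (x ⬝ᵥ x + y ⬝ᵥ y) := by
  have hx2 : ∀ i, (x i)^2 ≤ x ⬝ᵥ x := by
    intro i
    have := Finset.single_le_sum (f := fun j => x j * x j)
      (fun j _ => mul_self_nonneg _) (Finset.mem_univ i)
    simpa [dotProduct, sq] using this
  have hy2 : ∀ j, (y j)^2 ≤ y ⬝ᵥ y := by
    intro j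
    have := Finset.single_le_sum (f := fun i => y i * y i)
      (fun i _ => mul_self_nonneg _) (Finset.mem_univ j)
    simpa [dotProduct, sq] using this
  have key : ∀ i j, |x i * (M i j * y j)| ≤ |M i j| / 2 * (x ⬝ᵥ x + y ⬝ᵥ y) := by
    intro i j
    rw [show x i * (M i j * y j) = M i j * (x i * y j) by ring, abs_mul, abs_mul]
    have h1 : |x i| * |y j| ≤ (x ⬝ᵥ x + y ⬝ᵥ y) / 2 := by
      nlinarith [sq_nonneg (|x i| - |y j|), sq_abs (x i), sq_abs (y j), hx2 i, hy2 j,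
        abs_nonneg (x i), abs_nonneg (y j)]
    calc |M i j| * (|x i| * |y j|) ≤ |M i j| * ((x ⬝ᵥ x + y ⬝ᵥ y) / 2) := by
          exact mul_le_mul_of_nonneg_left h1 (abs_nonneg _)
      _ = |M i j| / 2 * (x ⬝ᵥ x + y ⬝ᵥ y) := by ring
  calc |x ⬝ᵥ (M *ᵥ y)| = |∑ i, ∑ j, x i * (M i j * y j)| := by
        simp [dotProduct, Matrix.mulVec, Finset.mul_sum]
    _ ≤ ∑ i, |∑ j, x i * (M i j * y j)| := Finset.abs_sum_le_sum_abs _ _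
    _ ≤ ∑ i, ∑ j, |x i * (M i j * y j)| :=
        Finset.sum_le_sum fun i _ => Finset.abs_sum_le_sum_abs _ _
    _ ≤ ∑ i, ∑ j, |M i j| / 2 * (x ⬝ᵥ x + y ⬝ᵥ y) :=
        Finset.sum_le_sum fun i _ => Finset.sum_le_sum fun j _ => key i j
    _ = (∑ i, ∑ j, |M i j|) / 2 * (x ⬝ᵥ x + y ⬝ᵥ y) := by
        simp only [Finset.sum_div, Finset.sum_mul]

lemma continuous_quadform {n : ℕ} (M : Matrix (Fin n) (Fin n) ℝ) :
    Continuous (fun z : Fin n → ℝ => z ⬝ᵥ (M *ᵥ z)) := by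
  simp only [dotProduct, Matrix.mulVec]
  apply continuous_finset_sum
  intro i _
  exact (continuous_apply i).mul
    (continuous_finset_sum _ fun j _ => continuous_const.mul (continuous_apply j))

lemma dot_self_pos {n : ℕ} {z : Fin n → ℝ} (hz : z ≠ 0) : 0 < z ⬝ᵥ z := by
  obtain ⟨i, hi⟩ := Function.ne_iff.mp hz
  have hi' : (0:ℝ) < z i * z i := mul_self_pos.mpr hi
  calc (0:ℝ) < z i * z i := hi'
    _ ≤ z ⬝ᵥ z := Finset.single_le_sum (f := fun j => z j * z j)
        (fun j _ => mul_self_nonneg _) (Finset.mem_univ i)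

lemma quad_lower_bound {n : ℕ} (hn : 0 < n) (M : Matrix (Fin n) (Fin n) ℝ)
    (h : ∀ z : Fin n → ℝ, z ≠ 0 → 0 < z ⬝ᵥ (M *ᵥ z)) :
    ∃ c : ℝ, 0 < c ∧ ∀ z : Fin n → ℝ, c * (z ⬝ᵥ z) ≤ z ⬝ᵥ (M *ᵥ z) := by
  set S : Set (Fin n → ℝ) := {z | z ⬝ᵥ z = 1} with hS
  have hSc : IsCompact S := by
    apply Metric.isCompact_of_isClosed_isBounded
    · exact isClosed_eq (continuous_id.dotProduct continuous_id) continuous_const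
    · rw [Metric.isBounded_iff_subset_closedBall 0]
      refine ⟨1, fun z hz => ?_⟩
      simp only [Metric.mem_closedBall, dist_zero_right]
      rw [pi_norm_le_iff_of_nonneg zero_le_one]
      intro i
      have h1 : z i * z i ≤ 1 := by
        have h2 := Finset.single_le_sum (f := fun j => z j * z j)
          (fun j _ => mul_self_nonneg _) (Finset.mem_univ i)
        have hz1 : (∑ j, z j * z j) = 1 := hz
        have h2' : z i * z i ≤ 1 := by simpa [hz1] using h2
        linarith
      rw [Real.norm_eq_abs]
      nlinarith [abs_nonneg (z i), abs_mul_abs_self (z i)]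
  have hSne : S.Nonempty := by
    refine ⟨fun i => if i = ⟨0, hn⟩ then 1 else 0, ?_⟩
    simp [hS, dotProduct, ite_mul, Finset.sum_ite_eq']
  obtain ⟨z₀, hz₀S, hz₀min⟩ := hSc.exists_isMinOn hSne (continuous_quadform M).continuousOn
  have hz₀ne : z₀ ≠ 0 := by
    intro hz
    have : z₀ ⬝ᵥ z₀ = 1 := hz₀S
    rw [hz] at this
    simp [dotProduct] at this
  refine ⟨z₀ ⬝ᵥ (M *ᵥ z₀), h z₀ hz₀ne, fun z => ?_⟩
  rcases eq_or_ne z 0 with rfl | hz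
  · simp [dotProduct, Matrix.mulVec]
  · have hzz : 0 < z ⬝ᵥ z := dot_self_pos hz
    set r : ℝ := Real.sqrt (z ⬝ᵥ z) with hr
    have hrpos : 0 < r := Real.sqrt_pos.mpr hzz
    have hr2 : r * r = z ⬝ᵥ z := Real.mul_self_sqrt hzz.le
    have hw : (r⁻¹ • z) ∈ S := by
      show (r⁻¹ • z) ⬝ᵥ (r⁻¹ • z) = 1
      rw [smul_dotProduct, dotProduct_smul, smul_eq_mul, smul_eq_mul, ← hr2]
      field_simp
    have hmin := hz₀min hw
    have hq : (r⁻¹ • z) ⬝ᵥ (M *ᵥ (r⁻¹ • z)) = r⁻¹ * r⁻¹ * (z ⬝ᵥ (M *ᵥ z)) := by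
      rw [Matrix.mulVec_smul, smul_dotProduct, dotProduct_smul, smul_eq_mul, smul_eq_mul]
      ring
    have : z₀ ⬝ᵥ (M *ᵥ z₀) ≤ r⁻¹ * r⁻¹ * (z ⬝ᵥ (M *ᵥ z)) := by
      rw [← hq]; exact hmin
    have hrr : r⁻¹ * r⁻¹ * (r * r) = 1 := by field_simp
    calc (z₀ ⬝ᵥ (M *ᵥ z₀)) * (z ⬝ᵥ z) ≤ (r⁻¹ * r⁻¹ * (z ⬝ᵥ (M *ᵥ z))) * (z ⬝ᵥ z) :=
          mul_le_mul_of_nonneg_right this hzz.le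
      _ = z ⬝ᵥ (M *ᵥ z) := by rw [← hr2]; field_simp

lemma pinv_LM {n : ℕ} (L M N : Matrix (Fin n) (Fin n) ℝ)
    (m1 : L * M * L = L) (m3 : (L * M)ᵀ = L * M)
    (n1 : L * N * L = L) (n3 : (L * N)ᵀ = L * N) :
    L * M = L * N := by
  calc L * M = (L * M)ᵀ := m3.symm
    _ = Mᵀ * Lᵀ := by rw [Matrix.transpose_mul]
    _ = Mᵀ * (L * N * L)ᵀ := by rw [n1]
    _ = Mᵀ * (Lᵀ * (L * N)ᵀ) := by rw [Matrix.transpose_mul]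
    _ = Mᵀ * (Lᵀ * (L * N)) := by rw [n3]
    _ = (Mᵀ * Lᵀ) * (L * N) := by rw [Matrix.mul_assoc]
    _ = (L * M)ᵀ * (L * N) := by rw [Matrix.transpose_mul]
    _ = (L * M) * (L * N) := by rw [m3]
    _ = (L * M * L) * N := by simp only [Matrix.mul_assoc]
    _ = L * N := by rw [m1]

lemma pinv_unique {n : ℕ} (L M N : Matrix (Fin n) (Fin n) ℝ)
    (m1 : L * M * L = L) (m2 : M * L * M = M) (m3 : (L * M)ᵀ = L * M) (m4 : (M * L)ᵀ = M * L)
    (n1 : L * N * L = L) (n2 : N * L * N = N) (n3 : (L * N)ᵀ = L * N) (n4 : (N * L)ᵀ = N * L) :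
    M = N := by
  have hLM : L * M = L * N := pinv_LM L M N m1 m3 n1 n3
  have tm1 : Lᵀ * Mᵀ * Lᵀ = Lᵀ := by
    rw [← Matrix.transpose_mul M L, ← Matrix.transpose_mul]
    rw [← Matrix.mul_assoc, m1]
  have tm3 : (Lᵀ * Mᵀ)ᵀ = Lᵀ * Mᵀ := by
    rw [← Matrix.transpose_mul M L, Matrix.transpose_transpose, m4]
  have tn1 : Lᵀ * Nᵀ * Lᵀ = Lᵀ := by
    rw [← Matrix.transpose_mul N L, ← Matrix.transpose_mul]
    rw [← Matrix.mul_assoc, n1]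
  have tn3 : (Lᵀ * Nᵀ)ᵀ = Lᵀ * Nᵀ := by
    rw [← Matrix.transpose_mul N L, Matrix.transpose_transpose, n4]
  have h := pinv_LM Lᵀ Mᵀ Nᵀ tm1 tm3 tn1 tn3
  have hML : M * L = N * L := by
    have h2 := congrArg Matrix.transpose h
    simpa [Matrix.transpose_mul] using h2
  calc M = M * L * M := m2.symm
    _ = N * L * M := by rw [hML]
    _ = N * (L * M) := by rw [Matrix.mul_assoc]
    _ = N * (L * N) := by rw [hLM]
    _ = N * L * N := by rw [Matrix.mul_assoc]
    _ = N := n2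

lemma graph_const {n m : ℕ} (G : SimpleGraph (Fin n)) (hG : G.Connected)
    (src tgt : Fin m → Fin n)
    (hsurj : ∀ e ∈ G.edgeSet, ∃ l : Fin m, s(src l, tgt l) = e)
    (z : Fin n → ℝ) (hz : ∀ l, z (src l) = z (tgt l)) :
    ∀ i j, z i = z j := by
  have key : ∀ i j, G.Adj i j → z i = z j := by
    intro i j hij
    obtain ⟨l, hl⟩ := hsurj s(i, j) (G.mem_edgeSet.mpr hij)
    rw [Sym2.eq_iff] at hl
    rcases hl with ⟨h1, h2⟩ | ⟨h1, h2⟩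
    · rw [← h1, ← h2]; exact hz l
    · rw [← h1, ← h2]; exact (hz l).symm
  intro i j
  obtain ⟨w⟩ := hG.preconnected i j
  induction w with
  | nil => rfl
  | cons h p ih => exact (key _ _ h).trans ih
lemma main_aux {n : ℕ}
    (L Ld : Matrix (Fin n) (Fin n) ℝ)
    (a b lam mu K : ℝ) (ha : 0 < a) (hb : 0 < b) (hlam : 0 < lam) (hmu : 0 < mu) (hK : 0 < K)
    (hLsym : ∀ x y : Fin n → ℝ, x ⬝ᵥ (L *ᵥ y) = (L *ᵥ x) ⬝ᵥ y)
    (hLdsym : ∀ x y : Fin n → ℝ, x ⬝ᵥ (Ld *ᵥ y) = (Ld *ᵥ x) ⬝ᵥ y)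
    (u v : ℝ → Fin n → ℝ)
    (hu : ∀ t : ℝ, 0 ≤ t → HasDerivAt u (-(a • (L *ᵥ u t)) + b • v t) t)
    (hv : ∀ t : ℝ, 0 ≤ t → HasDerivAt v (-(L *ᵥ u t)) t)
    (hPu : ∀ t, Ld *ᵥ (L *ᵥ u t) = u t)
    (hPv : ∀ t, L *ᵥ (Ld *ᵥ v t) = v t)
    (hlamL : ∀ t, lam * (u t ⬝ᵥ u t) ≤ u t ⬝ᵥ (L *ᵥ u t))
    (hmuLd : ∀ t, mu * (v t ⬝ᵥ v t) ≤ v t ⬝ᵥ (Ld *ᵥ v t))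
    (hKb : ∀ x y : Fin n → ℝ, |x ⬝ᵥ (Ld *ᵥ y)| ≤ K / 2 * (x ⬝ᵥ x + y ⬝ᵥ y)) :
    IntegrableOn (fun t => u t ⬝ᵥ (L *ᵥ u t)) (Set.Ioi (0:ℝ)) ∧
      ∫ t in Set.Ioi (0:ℝ), u t ⬝ᵥ (L *ᵥ u t)
        = (1/(2*a)) * (u 0 ⬝ᵥ u 0) + (b/(2*a)) * (v 0 ⬝ᵥ (Ld *ᵥ v 0)) := by
  -- derivative computations
  have huu : ∀ t : ℝ, 0 ≤ t → HasDerivAt (fun s => u s ⬝ᵥ u s)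
      (2*b*(u t ⬝ᵥ v t) - 2*a*(u t ⬝ᵥ (L *ᵥ u t))) t := by
    intro t ht
    have h := hasDerivAt_dot (hu t ht) (hu t ht)
    convert h using 1
    simp only [add_dotProduct, dotProduct_add, neg_dotProduct,
      dotProduct_neg, smul_dotProduct, dotProduct_smul, smul_eq_mul]
    rw [← hLsym (u t) (u t), dotProduct_comm (v t) (u t)]
    ring
  have hvv : ∀ t : ℝ, 0 ≤ t → HasDerivAt (fun s => v s ⬝ᵥ (Ld *ᵥ v s))
      (-2*(u t ⬝ᵥ v t)) t := by
    intro t ht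
    have h := hasDerivAt_dot (hv t ht) (hasDerivAt_mulVec Ld (hv t ht))
    convert h using 1
    rw [Matrix.mulVec_neg, neg_dotProduct, dotProduct_neg,
      hLdsym (L *ᵥ u t) (v t), hPu t, dotProduct_comm (v t) (u t)]
    ring
  have hUV : ∀ t : ℝ, 0 ≤ t → HasDerivAt (fun s => u s ⬝ᵥ (Ld *ᵥ v s))
      (-(a*(u t ⬝ᵥ v t)) + b*(v t ⬝ᵥ (Ld *ᵥ v t)) - (u t ⬝ᵥ u t)) t := by
    intro t ht
    have h := hasDerivAt_dot (hu t ht) (hasDerivAt_mulVec Ld (hv t ht))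
    convert h using 1
    simp only [add_dotProduct, neg_dotProduct, smul_dotProduct, smul_eq_mul]
    rw [Matrix.mulVec_neg, dotProduct_neg, hLdsym (L *ᵥ u t) (v t), hPu t]
    ring
  -- V and its derivative
  set V : ℝ → ℝ := fun t => (1/(2*a)) * (u t ⬝ᵥ u t) + (b/(2*a)) * (v t ⬝ᵥ (Ld *ᵥ v t)) with hVdef
  have hVd : ∀ t : ℝ, 0 ≤ t → HasDerivAt V (-(u t ⬝ᵥ (L *ᵥ u t))) t := by
    intro t ht
    have h := ((huu t ht).const_mul (1/(2*a))).fun_add ((hvv t ht).const_mul (b/(2*a)))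
    refine h.congr_deriv ?_
    field_simp
    ring
  -- constants
  have hD : (0:ℝ) < 1 + a^2/(2*b*mu) := by positivity
  set D : ℝ := 1 + a^2/(2*b*mu) with hDdef
  have hD1 : 1 ≤ D := by
    have : (0:ℝ) ≤ a^2/(2*b*mu) := by positivity
    rw [hDdef]; linarith
  have hc3m : (0:ℝ) < min 1 (b*mu) := lt_min one_pos (by positivity)
  set c3 : ℝ := min 1 (b*mu) / (2*a) with hc3def
  have hc3 : 0 < c3 := by rw [hc3def]; positivity
  set eps : ℝ := min (lam/(2*D)) (c3/K) with hepsdef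
  have heps : 0 < eps := lt_min (by positivity) (by positivity)
  have heps1 : eps * D ≤ lam / 2 := by
    have h1 : eps ≤ lam/(2*D) := min_le_left _ _
    calc eps * D ≤ (lam/(2*D)) * D := mul_le_mul_of_nonneg_right h1 (by linarith)
      _ = lam / 2 := by field_simp
  have heps2 : eps * K ≤ c3 := by
    have h1 : eps ≤ c3/K := min_le_right _ _
    calc eps * K ≤ (c3/K) * K := mul_le_mul_of_nonneg_right h1 hK.le
      _ = c3 := by field_simp
  set mm : ℝ := min 1 (b*mu/2) with hmmdef
  have hmm0 : 0 < mm := lt_min one_pos (by positivity)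
  have hmm1 : mm ≤ 1 := min_le_left _ _
  have hmm2 : mm ≤ b*mu/2 := min_le_right _ _
  set C2 : ℝ := 1/(2*a) + (b/(2*a))*K + eps*K/2 + 1 with hC2def
  have hC2 : 0 < C2 := by rw [hC2def]; positivity
  set cc : ℝ := eps*mm/C2 with hccdef
  have hcc : 0 < cc := by rw [hccdef]; positivity
  have hDexp : eps*(a^2/(2*b*mu)) + eps = eps*D := by rw [hDdef]; ring
  have hc31 : c3 ≤ 1/(2*a) := by
    rw [hc3def]; gcongr
    exact min_le_left _ _
  have hc32 : c3 ≤ (b*mu)/(2*a) := by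
    rw [hc3def]; gcongr
    exact min_le_right _ _
  clear_value D c3 eps mm C2 cc
  -- pointwise sign facts
  have hSu0 : ∀ t, (0:ℝ) ≤ u t ⬝ᵥ u t := fun t => dotSelf_nonneg _
  have hSv0 : ∀ t, (0:ℝ) ≤ v t ⬝ᵥ v t := fun t => dotSelf_nonneg _
  have hf0 : ∀ t, (0:ℝ) ≤ u t ⬝ᵥ (L *ᵥ u t) :=
    fun t => le_trans (mul_nonneg hlam.le (hSu0 t)) (hlamL t)
  have hvLd0 : ∀ t, (0:ℝ) ≤ v t ⬝ᵥ (Ld *ᵥ v t) :=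
    fun t => le_trans (mul_nonneg hmu.le (hSv0 t)) (hmuLd t)
  have hV0 : ∀ t, (0:ℝ) ≤ V t := by
    intro t
    rw [hVdef]
    have := hSu0 t; have := hvLd0 t
    positivity
  -- W and its derivative
  set W : ℝ → ℝ := fun t => V t - eps * (u t ⬝ᵥ (Ld *ᵥ v t)) with hWdef
  have hWd : ∀ t : ℝ, 0 ≤ t → HasDerivAt W
      (-(u t ⬝ᵥ (L *ᵥ u t)) + eps*a*(u t ⬝ᵥ v t) - eps*b*(v t ⬝ᵥ (Ld *ᵥ v t))
        + eps*(u t ⬝ᵥ u t)) t := by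
    intro t ht
    have h := (hVd t ht).fun_sub ((hUV t ht).const_mul eps)
    refine h.congr_deriv ?_
    ring
  -- P1 : derivative bound
  have P1 : ∀ t : ℝ, -(u t ⬝ᵥ (L *ᵥ u t)) + eps*a*(u t ⬝ᵥ v t) - eps*b*(v t ⬝ᵥ (Ld *ᵥ v t))
      + eps*(u t ⬝ᵥ u t) ≤ -(eps*mm)*((u t ⬝ᵥ u t) + (v t ⬝ᵥ v t)) := by
    intro t
    have f1 := hlamL t
    have f2 := hmuLd t
    have hsu := hSu0 t
    have hsv := hSv0 t
    have heta : (0:ℝ) < b*mu/a := by positivity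
    have f3 := abs_dot_le_weighted (u t) (v t) heta
    have e1 : eps*a*(u t ⬝ᵥ v t) ≤ eps*(a^2/(2*b*mu))*(u t ⬝ᵥ u t) + eps*(b*mu/2)*(v t ⬝ᵥ v t) := by
      have h4 : u t ⬝ᵥ v t ≤ (u t ⬝ᵥ u t)/(2*(b*mu/a)) + (b*mu/a)*(v t ⬝ᵥ v t)/2 :=
        le_trans (le_abs_self _) f3
      have h5 : eps*a*(u t ⬝ᵥ v t) ≤ eps*a*((u t ⬝ᵥ u t)/(2*(b*mu/a)) + (b*mu/a)*(v t ⬝ᵥ v t)/2) :=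
        mul_le_mul_of_nonneg_left h4 (by positivity)
      calc eps*a*(u t ⬝ᵥ v t) ≤ _ := h5
        _ = eps*(a^2/(2*b*mu))*(u t ⬝ᵥ u t) + eps*(b*mu/2)*(v t ⬝ᵥ v t) := by
            field_simp
    have e2 : eps*b*(mu*(v t ⬝ᵥ v t)) ≤ eps*b*(v t ⬝ᵥ (Ld *ᵥ v t)) :=
      mul_le_mul_of_nonneg_left f2 (by positivity)
    have e3 : 0 ≤ (lam - eps*D - eps*mm) * (u t ⬝ᵥ u t) := by
      apply mul_nonneg _ hsu
      have g2 : eps*mm ≤ eps*D := mul_le_mul_of_nonneg_left (le_trans hmm1 hD1) heps.le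
      linarith
    have e4 : 0 ≤ (eps*(b*mu/2) - eps*mm) * (v t ⬝ᵥ v t) := by
      apply mul_nonneg _ hsv
      have := mul_le_mul_of_nonneg_left hmm2 heps.le
      linarith
    have hDexp2 : eps*(a^2/(2*b*mu))*(u t ⬝ᵥ u t) + eps*(u t ⬝ᵥ u t)
        = eps*D*(u t ⬝ᵥ u t) := by rw [hDdef]; ring
    linarith [e1, e2, e3, e4, f1, hDexp2]
  -- P2 : W upper bound by Su+Sv
  have P2 : ∀ t : ℝ, W t ≤ C2 * ((u t ⬝ᵥ u t) + (v t ⬝ᵥ v t)) := by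
    intro t
    have hsu := hSu0 t
    have hsv := hSv0 t
    have h1 : v t ⬝ᵥ (Ld *ᵥ v t) ≤ K * (v t ⬝ᵥ v t) := by
      have := hKb (v t) (v t)
      have h2 := le_abs_self (v t ⬝ᵥ (Ld *ᵥ v t))
      linarith
    have h3 : -(eps * (u t ⬝ᵥ (Ld *ᵥ v t))) ≤ eps * (K/2 * ((u t ⬝ᵥ u t) + (v t ⬝ᵥ v t))) := by
      have h4 : -(u t ⬝ᵥ (Ld *ᵥ v t)) ≤ K/2 * ((u t ⬝ᵥ u t) + (v t ⬝ᵥ v t)) :=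
        le_trans (neg_le_abs _) (hKb (u t) (v t))
      calc -(eps * (u t ⬝ᵥ (Ld *ᵥ v t))) = eps * (-(u t ⬝ᵥ (Ld *ᵥ v t))) := by ring
        _ ≤ _ := mul_le_mul_of_nonneg_left h4 heps.le
    have h5 : (b/(2*a)) * (v t ⬝ᵥ (Ld *ᵥ v t)) ≤ (b/(2*a)) * (K * (v t ⬝ᵥ v t)) :=
      mul_le_mul_of_nonneg_left h1 (by positivity)
    have hx1 : (0:ℝ) ≤ (1/(2*a)) * (v t ⬝ᵥ v t) := by positivity
    have hx2 : (0:ℝ) ≤ ((b/(2*a))*K) * (u t ⬝ᵥ u t) := by positivity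
    have hx3 : (0:ℝ) ≤ (eps*K/2) * (u t ⬝ᵥ u t) := by positivity
    have hx4 : (0:ℝ) ≤ (eps*K/2) * (v t ⬝ᵥ v t) := by positivity
    simp only [hWdef, hVdef, hC2def]
    linarith [h3, h5, hx1, hx2, hx3, hx4]
  -- P3 : V ≤ 2 W
  have P3 : ∀ t : ℝ, V t ≤ 2 * W t := by
    intro t
    have hsu := hSu0 t
    have hsv := hSv0 t
    have h1 : eps * (u t ⬝ᵥ (Ld *ᵥ v t)) ≤ eps * (K/2 * ((u t ⬝ᵥ u t) + (v t ⬝ᵥ v t))) :=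
      mul_le_mul_of_nonneg_left (le_trans (le_abs_self _) (hKb (u t) (v t))) heps.le
    have h2 : eps * (K/2 * ((u t ⬝ᵥ u t) + (v t ⬝ᵥ v t)))
        ≤ (c3/2) * ((u t ⬝ᵥ u t) + (v t ⬝ᵥ v t)) := by
      have hp : (0:ℝ) ≤ (c3 - eps*K) * ((u t ⬝ᵥ u t) + (v t ⬝ᵥ v t)) :=
        mul_nonneg (sub_nonneg.mpr heps2) (add_nonneg hsu hsv)
      linarith [hp]
    have h3 : c3 * ((u t ⬝ᵥ u t) + (v t ⬝ᵥ v t)) ≤ V t := by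
      have k1 : (b/(2*a))*(mu*(v t ⬝ᵥ v t)) ≤ (b/(2*a))*(v t ⬝ᵥ (Ld *ᵥ v t)) :=
        mul_le_mul_of_nonneg_left (hmuLd t) (by positivity)
      have k2 : c3*(u t ⬝ᵥ u t) ≤ (1/(2*a))*(u t ⬝ᵥ u t) :=
        mul_le_mul_of_nonneg_right hc31 hsu
      have k3 : c3*(v t ⬝ᵥ v t) ≤ ((b*mu)/(2*a))*(v t ⬝ᵥ v t) :=
        mul_le_mul_of_nonneg_right hc32 hsv
      simp only [hVdef]
      ring_nf at k1 k2 k3 ⊢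
      linarith [k1, k2, k3]
    simp only [hWdef]
    linarith [h1, h2, h3]
  -- W' ≤ -cc W
  have hWle : ∀ t : ℝ, 0 ≤ t → (-(u t ⬝ᵥ (L *ᵥ u t)) + eps*a*(u t ⬝ᵥ v t)
      - eps*b*(v t ⬝ᵥ (Ld *ᵥ v t)) + eps*(u t ⬝ᵥ u t)) ≤ -cc * W t := by
    intro t ht
    have h1 := P1 t
    have h2 := P2 t
    have hccC2 : cc * C2 = eps * mm := by
      rw [hccdef]; field_simp
    have h3 : cc * W t ≤ cc * (C2 * ((u t ⬝ᵥ u t) + (v t ⬝ᵥ v t))) :=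
      mul_le_mul_of_nonneg_left h2 hcc.le
    have h4 : cc * (C2 * ((u t ⬝ᵥ u t) + (v t ⬝ᵥ v t)))
        = (eps*mm) * ((u t ⬝ᵥ u t) + (v t ⬝ᵥ v t)) := by
      rw [← mul_assoc, hccC2]
    linarith [h1, h3, h4]
  -- exponential decay of W
  set g : ℝ → ℝ := fun t => W t * Real.exp (cc * t) with hgdef
  have hgd : ∀ t : ℝ, 0 ≤ t → HasDerivAt g
      (((-(u t ⬝ᵥ (L *ᵥ u t)) + eps*a*(u t ⬝ᵥ v t) - eps*b*(v t ⬝ᵥ (Ld *ᵥ v t))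
        + eps*(u t ⬝ᵥ u t)) + cc * W t) * Real.exp (cc*t)) t := by
    intro t ht
    have hlin : HasDerivAt (fun s : ℝ => cc*s) cc t := by
      simpa using (hasDerivAt_id t).const_mul cc
    have hexp : HasDerivAt (fun s : ℝ => Real.exp (cc*s)) (Real.exp (cc*t) * cc) t := hlin.exp
    have h := (hWd t ht).fun_mul hexp
    refine h.congr_deriv ?_
    ring
  have hganti : AntitoneOn g (Set.Ici (0:ℝ)) := by
    apply antitoneOn_of_deriv_nonpos (convex_Ici 0)
    · intro t ht
      exact (hgd t ht).continuousAt.continuousWithinAt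
    · intro t ht
      rw [interior_Ici] at ht
      exact (hgd t ht.le).differentiableAt.differentiableWithinAt
    · intro t ht
      rw [interior_Ici] at ht
      rw [(hgd t ht.le).deriv]
      have h1 := hWle t ht.le
      have h2 := (Real.exp_pos (cc*t)).le
      apply mul_nonpos_of_nonpos_of_nonneg _ h2
      linarith [h1]
  have hWbd : ∀ T : ℝ, 0 ≤ T → W T * Real.exp (cc*T) ≤ W 0 := by
    intro T hT
    have h := hganti (Set.self_mem_Ici) (show T ∈ Set.Ici (0:ℝ) from hT) hT
    simpa [hgdef] using h
  have hVbd : ∀ T : ℝ, 0 ≤ T → V T ≤ 2 * W 0 * Real.exp (-(cc*T)) := by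
    intro T hT
    have h1 := P3 T
    have he := Real.exp_pos (cc*T)
    have h3 : W T ≤ W 0 / Real.exp (cc*T) := (le_div_iff₀ he).mpr (hWbd T hT)
    rw [Real.exp_neg]
    calc V T ≤ 2 * W T := h1
      _ ≤ 2 * (W 0 / Real.exp (cc*T)) := by linarith
      _ = 2 * W 0 * (Real.exp (cc*T))⁻¹ := by rw [div_eq_mul_inv]; ring
  have hVtend : Tendsto V atTop (𝓝 (0:ℝ)) := by
    have hup : Tendsto (fun T : ℝ => 2 * W 0 * Real.exp (-(cc*T))) atTop (𝓝 (0:ℝ)) := by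
      have h1 : Tendsto (fun T : ℝ => cc*T) atTop atTop :=
        Tendsto.const_mul_atTop hcc tendsto_id
      have h2 : Tendsto (fun T : ℝ => -(cc*T)) atTop atBot :=
        tendsto_neg_atTop_atBot.comp h1
      have h3 : Tendsto (fun T : ℝ => Real.exp (-(cc*T))) atTop (𝓝 0) :=
        Real.tendsto_exp_atBot.comp h2
      have h4 := h3.const_mul (2 * W 0)
      simpa using h4
    apply tendsto_of_tendsto_of_tendsto_of_le_of_le' tendsto_const_nhds hup
    · exact Eventually.of_forall hV0
    · filter_upwards [eventually_ge_atTop (0:ℝ)] with T hT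
      exact hVbd T hT
  -- continuity / integrability
  have hucont : ContinuousOn (fun t => u t ⬝ᵥ (L *ᵥ u t)) (Set.Ici (0:ℝ)) := by
    intro t ht
    have h1 : ContinuousAt u t := (hu t ht).continuousAt
    have h2 : ContinuousAt (fun s => u s ⬝ᵥ (L *ᵥ u s)) t :=
      ((continuous_quadform L).continuousAt).comp h1
    exact h2.continuousWithinAt
  have hFTC : ∀ T : ℝ, 0 ≤ T → ∫ t in (0:ℝ)..T, (u t ⬝ᵥ (L *ᵥ u t)) = V 0 - V T := by
    intro T hT
    have huIcc : Set.uIcc (0:ℝ) T = Set.Icc 0 T := Set.uIcc_of_le hT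
    have hderiv : ∀ s ∈ Set.uIcc (0:ℝ) T, HasDerivAt V (-(u s ⬝ᵥ (L *ᵥ u s))) s := by
      intro s hs
      rw [huIcc] at hs
      exact hVd s hs.1
    have hint : IntervalIntegrable (fun t => -(u t ⬝ᵥ (L *ᵥ u t))) volume 0 T := by
      apply ContinuousOn.intervalIntegrable
      rw [huIcc]
      exact (hucont.mono Set.Icc_subset_Ici_self).neg
    have h := intervalIntegral.integral_eq_sub_of_hasDerivAt hderiv hint
    rw [intervalIntegral.integral_neg] at h
    linarith [h]
  have hIoc : ∀ T : ℝ, IntegrableOn (fun t => u t ⬝ᵥ (L *ᵥ u t)) (Set.Ioc 0 T) := by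
    intro T
    rcases le_or_gt T 0 with h | h
    · rw [Set.Ioc_eq_empty (by exact fun hlt => absurd (lt_of_lt_of_le hlt h) (lt_irrefl 0))]
      exact integrableOn_empty
    · exact ((hucont.mono Set.Icc_subset_Ici_self).integrableOn_Icc).mono_set
        Set.Ioc_subset_Icc_self
  have hnorm : ∀ᶠ T in (atTop : Filter ℝ), ∫ t in (0:ℝ)..T, ‖u t ⬝ᵥ (L *ᵥ u t)‖ ≤ V 0 := by
    filter_upwards [eventually_ge_atTop (0:ℝ)] with T hT
    have hcongr : ∀ t ∈ Set.uIcc (0:ℝ) T, ‖u t ⬝ᵥ (L *ᵥ u t)‖ = u t ⬝ᵥ (L *ᵥ u t) :=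
      fun t _ => Real.norm_of_nonneg (hf0 t)
    rw [intervalIntegral.integral_congr hcongr, hFTC T hT]
    linarith [hV0 T]
  have hInt : IntegrableOn (fun t => u t ⬝ᵥ (L *ᵥ u t)) (Set.Ioi (0:ℝ)) :=
    integrableOn_Ioi_of_intervalIntegral_norm_bounded (V 0) 0 hIoc tendsto_id hnorm
  refine ⟨hInt, ?_⟩
  have hlim1 := intervalIntegral_tendsto_integral_Ioi (0:ℝ) hInt
    (tendsto_id : Tendsto (id : ℝ → ℝ) atTop atTop)
  have hlim2 : Tendsto (fun T : ℝ => ∫ t in (0:ℝ)..T, (u t ⬝ᵥ (L *ᵥ u t))) atTop (𝓝 (V 0)) := by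
    have h1 : Tendsto (fun T : ℝ => V 0 - V T) atTop (𝓝 (V 0 - 0)) :=
      tendsto_const_nhds.sub hVtend
    rw [sub_zero] at h1
    apply h1.congr'
    filter_upwards [eventually_ge_atTop (0:ℝ)] with T hT
    exact (hFTC T hT).symm
  have hval := tendsto_nhds_unique hlim1 hlim2
  rw [hval, hVdef]

theorem stmt2
    (n m : ℕ) (hn : 2 ≤ n)
    (G : SimpleGraph (Fin n)) (hG : G.Connected)
    (src tgt : Fin m → Fin n)
    (hadj : ∀ l, G.Adj (src l) (tgt l))
    (hinj : ∀ l l' : Fin m, s(src l, tgt l) = s(src l', tgt l') → l = l')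
    (hsurj : ∀ e ∈ G.edgeSet, ∃ l : Fin m, s(src l, tgt l) = e)
    (B : Matrix (Fin n) (Fin m) ℝ)
    (hB : ∀ i l, B i l = if i = src l then (1 : ℝ) else if i = tgt l then -1 else 0)
    (L : Matrix (Fin n) (Fin n) ℝ) (hL : L = B * Bᵀ)
    (Ldag : Matrix (Fin n) (Fin n) ℝ)
    (hd1 : L * Ldag * L = L) (hd2 : Ldag * L * Ldag = Ldag)
    (hd3 : (L * Ldag)ᵀ = L * Ldag) (hd4 : (Ldag * L)ᵀ = Ldag * L)
    (a b : ℝ) (ha : 0 < a) (hb : 0 < b)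
    (ωu : Fin n → ℝ)
    (A : Matrix (Fin n ⊕ Fin n) (Fin n ⊕ Fin n) ℝ)
    (hA : A = Matrix.fromBlocks (-(a • L)) (b • (1 : Matrix (Fin n) (Fin n) ℝ)) (-L) 0)
    (B2 : Matrix (Fin n ⊕ Fin n) (Fin n) ℝ)
    (hB2 : B2 = Matrix.fromRows (1 : Matrix (Fin n) (Fin n) ℝ) 0)
    (C1 : Matrix (Fin n) (Fin n ⊕ Fin n) ℝ)
    (hC1 : C1 = Matrix.fromCols (-(a • L)) (b • (1 : Matrix (Fin n) (Fin n) ℝ)))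
    (C2 : Matrix (Fin m) (Fin n ⊕ Fin n) ℝ)
    (hC2 : C2 = Matrix.fromCols (-Bᵀ) 0)
    (x : ℝ → (Fin n ⊕ Fin n) → ℝ)
    (hx0 : x 0 = 0)
    (hx : ∀ t : ℝ, 0 ≤ t → HasDerivAt x (A *ᵥ x t + B2 *ᵥ ωu) t)
    (ω : ℝ → Fin n → ℝ) (hω : ∀ t, ω t = C1 *ᵥ x t + ωu)
    (δ : ℝ → Fin m → ℝ) (hδ : ∀ t, δ t = C2 *ᵥ x t)
    (ωavg : ℝ) (hωavg : ωavg = (1 / (n : ℝ)) * ∑ i, ωu i)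
    (ωss : Fin n → ℝ) (hωss : ωss = fun _ => ωavg)
    :
    IntegrableOn (fun t => ∑ l, (δ t l) ^ 2) (Set.Ioi (0 : ℝ)) ∧
      ∫ t in Set.Ioi (0 : ℝ), (∑ l, (δ t l) ^ 2) =
        (1 / (2 * a * b)) * (ωu ⬝ᵥ (Ldag *ᵥ ωu)) := by
  have hn0 : 0 < n := lt_of_lt_of_le two_pos hn
  -- matrix symmetry facts
  have hLsymM : Lᵀ = L := by rw [hL, Matrix.transpose_mul, Matrix.transpose_transpose]
  have hdagsym : Ldagᵀ = Ldag := by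
    have e1 : L * Ldagᵀ * L = L := by
      conv_lhs => rw [← hLsymM]
      rw [show Lᵀ * Ldagᵀ * Lᵀ = (L * (Ldag * L))ᵀ from by
        simp only [Matrix.transpose_mul, Matrix.mul_assoc]]
      rw [← Matrix.mul_assoc, hd1, hLsymM]
    have e2 : Ldagᵀ * L * Ldagᵀ = Ldagᵀ := by
      conv_lhs => rw [← hLsymM]
      rw [show Ldagᵀ * Lᵀ * Ldagᵀ = (Ldag * (L * Ldag))ᵀ from by
        simp only [Matrix.transpose_mul, Matrix.mul_assoc]]
      rw [← Matrix.mul_assoc, hd2]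
    have key3 : L * Ldagᵀ = Ldag * L := by
      conv_lhs => rw [← hLsymM]
      rw [← Matrix.transpose_mul, hd4]
    have e3 : (L * Ldagᵀ)ᵀ = L * Ldagᵀ := by rw [key3, hd4]
    have key4 : Ldagᵀ * L = L * Ldag := by
      conv_lhs => rw [← hLsymM]
      rw [← Matrix.transpose_mul, hd3]
    have e4 : (Ldagᵀ * L)ᵀ = Ldagᵀ * L := by rw [key4, hd3]
    exact (pinv_unique L Ldag Ldagᵀ hd1 hd2 hd3 hd4 e1 e2 e3 e4).symm
  have hcomm : L * Ldag = Ldag * L := by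
    rw [← hd3, Matrix.transpose_mul, hdagsym, hLsymM]
  have hPL : (Ldag * L) * L = L := by rw [← hcomm, hd1]
  have hLP : L * (Ldag * L) = L := by rw [← Matrix.mul_assoc, hd1]
  have hPP : (Ldag * L) * (Ldag * L) = Ldag * L := by rw [Matrix.mul_assoc, hLP]
  have hPdag : (Ldag * L) * Ldag = Ldag := hd2
  have hdagP : Ldag * (Ldag * L) = Ldag := by rw [← hcomm, ← Matrix.mul_assoc, hd2]
  have hDLP : Ldag * (L * (Ldag * L)) = Ldag * L := by rw [hLP]
  -- symmetric quadratic form facts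
  have hLsymV : ∀ z w : Fin n → ℝ, z ⬝ᵥ (L *ᵥ w) = (L *ᵥ z) ⬝ᵥ w := by
    intro z w; rw [dot_mulVec_transfer, hLsymM]
  have hLdsymV : ∀ z w : Fin n → ℝ, z ⬝ᵥ (Ldag *ᵥ w) = (Ldag *ᵥ z) ⬝ᵥ w := by
    intro z w; rw [dot_mulVec_transfer, hdagsym]
  -- incidence matrix facts
  have hBt : ∀ (z : Fin n → ℝ) (l : Fin m), (Bᵀ *ᵥ z) l = z (src l) - z (tgt l) := by
    intro z l
    have hne := (hadj l).ne
    have hsplit : ∀ i : Fin n, Bᵀ l i * z i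
        = (if i = src l then z i else 0) + (if i = tgt l then -z i else 0) := by
      intro i
      rw [Matrix.transpose_apply, hB]
      by_cases h1 : i = src l
      · subst h1
        simp [hne]
      · by_cases h2 : i = tgt l
        · subst h2; simp [h1]
        · simp [h1, h2]
    calc (Bᵀ *ᵥ z) l = ∑ i, Bᵀ l i * z i := by simp [Matrix.mulVec, dotProduct]
      _ = ∑ i, ((if i = src l then z i else 0) + (if i = tgt l then -z i else 0)) :=
          Finset.sum_congr rfl fun i _ => hsplit i
      _ = z (src l) - z (tgt l) := by
          rw [Finset.sum_add_distrib]
          simp [Finset.sum_ite_eq', sub_eq_add_neg]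
  have hBone : Bᵀ *ᵥ (fun _ => (1:ℝ)) = 0 := by
    funext l; rw [hBt]; simp
  have hLone : L *ᵥ (fun _ => (1:ℝ)) = 0 := by
    rw [hL, ← Matrix.mulVec_mulVec, hBone, Matrix.mulVec_zero]
  have zLz : ∀ z : Fin n → ℝ, z ⬝ᵥ (L *ᵥ z) = (Bᵀ *ᵥ z) ⬝ᵥ (Bᵀ *ᵥ z) := by
    intro z
    rw [hL, ← Matrix.mulVec_mulVec, dot_mulVec_transfer]
  have hker : ∀ z : Fin n → ℝ, Bᵀ *ᵥ z = 0 → (∑ i, z i) = 0 → z = 0 := by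
    intro z h0 hsum
    have hcz : ∀ l, z (src l) = z (tgt l) := by
      intro l
      have h := congrFun h0 l
      rw [hBt z l] at h
      have h' : z (src l) - z (tgt l) = 0 := h
      linarith
    have hconst := graph_const G hG src tgt hsurj z hcz
    funext i
    have hsame : ∀ j, z j = z i := fun j => hconst j i
    have hsum2 : ∑ j, z j = (n : ℝ) * z i := by
      rw [Finset.sum_congr rfl fun j _ => hsame j]
      simp [Finset.sum_const, Finset.card_univ, mul_comm]
    rw [hsum2] at hsum
    have hnne : (n:ℝ) ≠ 0 := Nat.cast_ne_zero.mpr hn0.ne'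
    have := mul_eq_zero.mp hsum
    simp only [Pi.zero_apply]
    tauto
  -- quadratic lower bounds
  set Jm : Matrix (Fin n) (Fin n) ℝ := Matrix.of (fun _ _ => (1:ℝ)) with hJdef
  have hJq : ∀ z : Fin n → ℝ, z ⬝ᵥ (Jm *ᵥ z) = (∑ i, z i)^2 := by
    intro z
    calc z ⬝ᵥ (Jm *ᵥ z) = ∑ i, z i * (∑ j, z j) := by
          simp [hJdef, Matrix.mulVec, dotProduct]
      _ = (∑ i, z i) * (∑ j, z j) := by rw [← Finset.sum_mul]
      _ = (∑ i, z i)^2 := (sq (∑ i, z i)).symm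
  have hposL : ∀ z : Fin n → ℝ, z ≠ 0 → 0 < z ⬝ᵥ ((L + Jm) *ᵥ z) := by
    intro z hz
    rw [Matrix.add_mulVec, dotProduct_add, zLz, hJq]
    have h1 := dotSelf_nonneg (Bᵀ *ᵥ z)
    have h2 := sq_nonneg (∑ i, z i)
    rcases lt_or_eq_of_le h1 with h | h
    · positivity
    rcases lt_or_eq_of_le h2 with h' | h'
    · positivity
    exfalso
    exact hz (hker z (dotProduct_self_eq_zero.mp h.symm) (by
      have := h'.symm
      exact pow_eq_zero_iff (two_ne_zero) |>.mp this))
  obtain ⟨lam, hlam, hlamB⟩ := quad_lower_bound hn0 (L + Jm) hposL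
  have hlamL' : ∀ z : Fin n → ℝ, (∑ i, z i) = 0 → lam * (z ⬝ᵥ z) ≤ z ⬝ᵥ (L *ᵥ z) := by
    intro z h0
    have h := hlamB z
    rwa [Matrix.add_mulVec, dotProduct_add, hJq, h0, (by norm_num : (0:ℝ)^2 = 0),
      add_zero] at h
  have zdagz : ∀ z : Fin n → ℝ,
      z ⬝ᵥ (Ldag *ᵥ z) = (Ldag *ᵥ z) ⬝ᵥ (L *ᵥ (Ldag *ᵥ z)) := by
    intro z
    rw [Matrix.mulVec_mulVec, dot_mulVec_transfer (L * Ldag) (Ldag *ᵥ z) z]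
    rw [show (L * Ldag)ᵀ = Ldag * L from by rw [hd3, hcomm], Matrix.mulVec_mulVec,
      Matrix.mul_assoc, ← Matrix.mul_assoc, hd2]
    exact (dotProduct_comm _ _).symm
  have hposLd : ∀ z : Fin n → ℝ, z ≠ 0 → 0 < z ⬝ᵥ ((Ldag + Jm) *ᵥ z) := by
    intro z hz
    rw [Matrix.add_mulVec, dotProduct_add, hJq, zdagz, zLz]
    have h1 := dotSelf_nonneg (Bᵀ *ᵥ (Ldag *ᵥ z))
    have h2 := sq_nonneg (∑ i, z i)
    rcases lt_or_eq_of_le h1 with h | h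
    · positivity
    rcases lt_or_eq_of_le h2 with h' | h'
    · positivity
    exfalso
    have hw0 : Bᵀ *ᵥ (Ldag *ᵥ z) = 0 := dotProduct_self_eq_zero.mp h.symm
    have hsum0 : (∑ i, z i) = 0 := pow_eq_zero_iff (two_ne_zero) |>.mp h'.symm
    have hPz : L *ᵥ (Ldag *ᵥ z) = 0 := by
      rw [hL, ← Matrix.mulVec_mulVec, hw0, Matrix.mulVec_zero]
    have hLz : L *ᵥ z = 0 := by
      have : (L * (L * Ldag)) *ᵥ z = 0 := by
        rw [← Matrix.mulVec_mulVec, ← Matrix.mulVec_mulVec, hPz, Matrix.mulVec_zero]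
      rwa [show L * (L * Ldag) = L from by rw [hcomm, ← Matrix.mul_assoc, hd1]] at this
    have hBz : Bᵀ *ᵥ z = 0 := by
      have hzz : z ⬝ᵥ (L *ᵥ z) = 0 := by rw [hLz, dotProduct_zero]
      rw [zLz] at hzz
      exact dotProduct_self_eq_zero.mp hzz
    exact hz (hker z hBz hsum0)
  obtain ⟨mu, hmu, hmuB⟩ := quad_lower_bound hn0 (Ldag + Jm) hposLd
  have hmuLd' : ∀ z : Fin n → ℝ, (∑ i, z i) = 0 → mu * (z ⬝ᵥ z) ≤ z ⬝ᵥ (Ldag *ᵥ z) := by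
    intro z h0
    have h := hmuB z
    rwa [Matrix.add_mulVec, dotProduct_add, hJq, h0, (by norm_num : (0:ℝ)^2 = 0),
      add_zero] at h
  -- K bound
  set K : ℝ := (∑ i, ∑ j, |Ldag i j|) + 1 with hKdef
  have hK : 0 < K := by
    rw [hKdef]
    have : (0:ℝ) ≤ ∑ i, ∑ j, |Ldag i j| :=
      Finset.sum_nonneg fun i _ => Finset.sum_nonneg fun j _ => abs_nonneg _
    linarith
  have hKb : ∀ z w : Fin n → ℝ, |z ⬝ᵥ (Ldag *ᵥ w)| ≤ K / 2 * (z ⬝ᵥ z + w ⬝ᵥ w) := by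
    intro z w
    have h1 := abs_dot_mulVec_le Ldag z w
    have h2 : (∑ i, ∑ j, |Ldag i j|) / 2 * (z ⬝ᵥ z + w ⬝ᵥ w) ≤ K / 2 * (z ⬝ᵥ z + w ⬝ᵥ w) := by
      apply mul_le_mul_of_nonneg_right _ (add_nonneg (dotSelf_nonneg z) (dotSelf_nonneg w))
      rw [hKdef]; linarith
    linarith
  -- dynamics
  set p : ℝ → Fin n → ℝ := fun t i => x t (Sum.inl i) with hpdef
  set q : ℝ → Fin n → ℝ := fun t i => x t (Sum.inr i) with hqdef
  have hxelim : ∀ t, x t = Sum.elim (p t) (q t) := by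
    intro t; funext s; cases s <;> rfl
  have hRHS : ∀ t, A *ᵥ x t + B2 *ᵥ ωu
      = Sum.elim (-(a • (L *ᵥ p t)) + b • q t + ωu) (-(L *ᵥ p t)) := by
    intro t
    rw [hA, hB2, hxelim t, Matrix.fromBlocks_mulVec, Matrix.fromRows_mulVec]
    funext s
    cases s with
    | inl i =>
      simp [Sum.elim_comp_inl, Sum.elim_comp_inr, Matrix.neg_mulVec,
        Matrix.smul_mulVec, Matrix.one_mulVec, Matrix.zero_mulVec]
    | inr i =>
      simp [Sum.elim_comp_inl, Sum.elim_comp_inr, Matrix.neg_mulVec,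
        Matrix.smul_mulVec, Matrix.one_mulVec, Matrix.zero_mulVec]
  have hp : ∀ t : ℝ, 0 ≤ t → HasDerivAt p (-(a • (L *ᵥ p t)) + b • q t + ωu) t := by
    intro t ht
    have h := hx t ht
    rw [hRHS t] at h
    rw [hasDerivAt_pi] at h ⊢
    intro i
    exact h (Sum.inl i)
  have hq : ∀ t : ℝ, 0 ≤ t → HasDerivAt q (-(L *ᵥ p t)) t := by
    intro t ht
    have h := hx t ht
    rw [hRHS t] at h
    rw [hasDerivAt_pi] at h ⊢
    intro i
    exact h (Sum.inr i)
  set u : ℝ → Fin n → ℝ := fun t => (Ldag * L) *ᵥ p t with hudef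
  set v : ℝ → Fin n → ℝ := fun t => (Ldag * L) *ᵥ (q t + (1/b) • ωu) with hvdef
  have hLu : ∀ t, L *ᵥ u t = L *ᵥ p t := by
    intro t
    simp only [hudef, Matrix.mulVec_mulVec, hLP]
  have hu : ∀ t : ℝ, 0 ≤ t → HasDerivAt u (-(a • (L *ᵥ u t)) + b • v t) t := by
    intro t ht
    have h := hasDerivAt_mulVec (Ldag * L) (hp t ht)
    convert h using 1
    simp only [hudef, hvdef, Matrix.mulVec_add, Matrix.mulVec_neg, Matrix.mulVec_smul,
      Matrix.mulVec_mulVec, hPL, hLP, smul_add, smul_smul]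
    rw [mul_one_div, div_self hb.ne', one_smul]
    abel
  have hv : ∀ t : ℝ, 0 ≤ t → HasDerivAt v (-(L *ᵥ u t)) t := by
    intro t ht
    have hqc : HasDerivAt (fun s => q s + (1/b) • ωu) (-(L *ᵥ p t)) t :=
      (hq t ht).add_const _
    have h := hasDerivAt_mulVec (Ldag * L) hqc
    convert h using 1
    simp only [hudef, Matrix.mulVec_neg, Matrix.mulVec_mulVec, hPL, hLP]
  have hPu : ∀ t, Ldag *ᵥ (L *ᵥ u t) = u t := by
    intro t
    simp only [hudef, Matrix.mulVec_mulVec]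
    congr 1
  have hPv : ∀ t, L *ᵥ (Ldag *ᵥ v t) = v t := by
    intro t
    simp only [hvdef, Matrix.mulVec_mulVec]
    congr 1
    rw [hdagP, hcomm]
  -- zero-sum facts
  have hsum0 : ∀ z : Fin n → ℝ, (∑ i, ((Ldag * L) *ᵥ z) i) = 0 := by
    intro z
    have h1 : (∑ i, ((Ldag * L) *ᵥ z) i) = (fun _ => (1:ℝ)) ⬝ᵥ ((Ldag * L) *ᵥ z) := by
      simp [dotProduct]
    rw [h1, dot_mulVec_transfer, hd4, ← Matrix.mulVec_mulVec, hLone, Matrix.mulVec_zero,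
      zero_dotProduct]
  have hlamLt : ∀ t, lam * (u t ⬝ᵥ u t) ≤ u t ⬝ᵥ (L *ᵥ u t) := by
    intro t
    refine hlamL' (u t) ?_
    simpa only [hudef] using hsum0 (p t)
  have hmuLdt : ∀ t, mu * (v t ⬝ᵥ v t) ≤ v t ⬝ᵥ (Ldag *ᵥ v t) := by
    intro t
    refine hmuLd' (v t) ?_
    simpa only [hvdef] using hsum0 (q t + (1/b) • ωu)
  have main := main_aux L Ldag a b lam mu K ha hb hlam hmu hK hLsymV hLdsymV u v
    hu hv hPu hPv hlamLt hmuLdt hKb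
  have hf : ∀ t, (∑ l, (δ t l)^2) = u t ⬝ᵥ (L *ᵥ u t) := by
    intro t
    rw [hδ t, hC2, hxelim t, Matrix.fromCols_mulVec_sumElim, Matrix.zero_mulVec,
      add_zero, Matrix.neg_mulVec]
    have h2 : u t ⬝ᵥ (L *ᵥ u t) = p t ⬝ᵥ (L *ᵥ p t) := by
      rw [hLu t, hLsymV, hLu t, dotProduct_comm]
    rw [h2, zLz]
    simp [dotProduct, sq, Pi.neg_apply, neg_mul, mul_neg, neg_neg]
  have hfun : (fun t => ∑ l, (δ t l)^2) = (fun t => u t ⬝ᵥ (L *ᵥ u t)) := funext hf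
  rw [hfun]
  refine ⟨main.1, ?_⟩
  rw [main.2]
  have hp0 : p 0 = 0 := by
    funext i
    simp [hpdef, hx0]
  have hq0 : q 0 = 0 := by
    funext i
    simp [hqdef, hx0]
  have hu0 : u 0 = 0 := by
    simp [hudef, hp0]
  have hv0 : v 0 = (1/b) • ((Ldag * L) *ᵥ ωu) := by
    simp [hvdef, hq0, Matrix.mulVec_smul]
  rw [hu0, hv0]
  have hkey : ((Ldag * L) *ᵥ ωu) ⬝ᵥ (Ldag *ᵥ ((Ldag * L) *ᵥ ωu)) = ωu ⬝ᵥ (Ldag *ᵥ ωu) := by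
    rw [Matrix.mulVec_mulVec, show Ldag * (Ldag * L) = Ldag from hdagP]
    rw [dot_mulVec_transfer Ldag ((Ldag * L) *ᵥ ωu) ωu, hdagsym, Matrix.mulVec_mulVec,
      hdagP, dotProduct_comm]
  rw [Matrix.mulVec_smul, smul_dotProduct, dotProduct_smul, smul_eq_mul,
    smul_eq_mul, hkey]
  simp only [dotProduct_zero, zero_dotProduct]
  field_simp
  ring
end

section
/- The matrix X₁ = [[ (a/2) L̂ + (b/(2a)) I, −(b/2) I ], [ −(b/2) I, (b²/(2a)) L̂⁻¹ ]] satisfies the Lyapunov equation Âᵀ X₁ + X₁ Â + Ĉ₁ᵀ Ĉ₁ = 0. -/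
open Matrix MeasureTheory Filter Topology

theorem stmt3
    (n m : ℕ) (hn : 2 ≤ n)
    (G : SimpleGraph (Fin n)) (hG : G.Connected)
    (src tgt : Fin m → Fin n)
    (hadj : ∀ l, G.Adj (src l) (tgt l))
    (hinj : ∀ l l' : Fin m, s(src l, tgt l) = s(src l', tgt l') → l = l')
    (hsurj : ∀ e ∈ G.edgeSet, ∃ l : Fin m, s(src l, tgt l) = e)
    (B : Matrix (Fin n) (Fin m) ℝ)
    (hB : ∀ i l, B i l = if i = src l then (1 : ℝ) else if i = tgt l then -1 else 0)
    (L : Matrix (Fin n) (Fin n) ℝ) (hL : L = B * Bᵀ)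
    (U1 : Matrix (Fin n) (Fin (n - 1)) ℝ)
    (hU1 : U1ᵀ * U1 = 1)
    (hU1one : U1ᵀ *ᵥ (fun _ => (1 : ℝ)) = 0)
    (Lhat : Matrix (Fin (n - 1)) (Fin (n - 1)) ℝ) (hLhat : Lhat = U1ᵀ * L * U1)
    (a b : ℝ) (ha : 0 < a) (hb : 0 < b)
    (Ahat : Matrix (Fin (n - 1) ⊕ Fin (n - 1)) (Fin (n - 1) ⊕ Fin (n - 1)) ℝ)
    (hAhat : Ahat = Matrix.fromBlocks (-(a • Lhat)) (b • (1 : Matrix (Fin (n - 1)) (Fin (n - 1)) ℝ)) (-Lhat) 0)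
    (C1hat : Matrix (Fin n) (Fin (n - 1) ⊕ Fin (n - 1)) ℝ)
    (hC1hat : C1hat = Matrix.fromCols (-(a • (L * U1))) (b • U1))
    (X1 : Matrix (Fin (n - 1) ⊕ Fin (n - 1)) (Fin (n - 1) ⊕ Fin (n - 1)) ℝ)
    (hX1 : X1 = Matrix.fromBlocks
      ((a / 2) • Lhat + (b / (2 * a)) • (1 : Matrix (Fin (n - 1)) (Fin (n - 1)) ℝ))
      (-((b / 2) • (1 : Matrix (Fin (n - 1)) (Fin (n - 1)) ℝ)))
      (-((b / 2) • (1 : Matrix (Fin (n - 1)) (Fin (n - 1)) ℝ)))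
      ((b ^ 2 / (2 * a)) • Lhat⁻¹))
    :
    Ahatᵀ * X1 + X1 * Ahat + C1hatᵀ * C1hat = 0 := by
  have hn0 : (n : ℝ) ≠ 0 := Nat.cast_ne_zero.mpr (by omega)
  -- L is symmetric
  have hLt : Lᵀ = L := by rw [hL, Matrix.transpose_mul, Matrix.transpose_transpose]
  -- columns of B sum to zero
  have hBone : Bᵀ *ᵥ (fun _ => (1 : ℝ)) = 0 := by
    funext l
    have hst : src l ≠ tgt l := (hadj l).ne
    simp only [Matrix.mulVec, dotProduct, Matrix.transpose_apply, hB, mul_one,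
      Pi.zero_apply]
    have : ∀ i : Fin n, (if i = src l then (1 : ℝ) else if i = tgt l then -1 else 0)
        = (if i = src l then (1 : ℝ) else 0) + (if i = tgt l then (-1 : ℝ) else 0) := by
      intro i
      by_cases h1 : i = src l
      · subst h1; simp [hst]
      · by_cases h2 : i = tgt l <;> simp [h1, h2, Ne.symm hst]
    rw [Finset.sum_congr rfl (fun i _ => this i), Finset.sum_add_distrib]
    simp
  -- L annihilates the all-ones vector
  have hLone : L *ᵥ (fun _ => (1 : ℝ)) = 0 := by
    rw [hL, ← Matrix.mulVec_mulVec, hBone, Matrix.mulVec_zero]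
  -- vectors in the kernel of Bᵀ are constant
  have hker : ∀ u : Fin n → ℝ, Bᵀ *ᵥ u = 0 → ∀ i j : Fin n, u i = u j := by
    intro u hu
    have hedge : ∀ l : Fin m, u (src l) = u (tgt l) := by
      intro l
      have h0 : (Bᵀ *ᵥ u) l = 0 := by rw [hu]; rfl
      have hst : src l ≠ tgt l := (hadj l).ne
      have : ∀ i : Fin n, B i l * u i
          = (if i = src l then u i else 0) + (if i = tgt l then -u i else 0) := by
        intro i
        rw [hB]
        by_cases h1 : i = src l
        · subst h1; simp [hst]
        · by_cases h2 : i = tgt l <;> simp [h1, h2, Ne.symm hst]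
      simp only [Matrix.mulVec, dotProduct, Matrix.transpose_apply] at h0
      rw [Finset.sum_congr rfl (fun i _ => this i), Finset.sum_add_distrib] at h0
      simp only [Finset.sum_ite_eq', Finset.mem_univ, if_true] at h0
      linarith
    have hadj' : ∀ i j : Fin n, G.Adj i j → u i = u j := by
      intro i j hij
      obtain ⟨l, hl⟩ := hsurj s(i, j) (G.mem_edgeSet.mpr hij)
      rcases Sym2.eq_iff.mp hl with ⟨h1, h2⟩ | ⟨h1, h2⟩
      · rw [← h1, ← h2]; exact hedge l
      · rw [← h1, ← h2]; exact (hedge l).symm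
    intro i j
    obtain ⟨w⟩ := hG.preconnected i j
    induction w with
    | nil => rfl
    | cons h p ih => exact (hadj' _ _ h).trans ih
  -- Lhat is invertible
  have hdet : IsUnit Lhat.det := by
    rw [isUnit_iff_ne_zero]
    intro hd
    obtain ⟨x, hx0, hx⟩ := (Matrix.exists_mulVec_eq_zero_iff).mpr hd
    set u : Fin n → ℝ := U1 *ᵥ x with hu
    have h1 : u ⬝ᵥ (L *ᵥ u) = 0 := by
      have : x ⬝ᵥ (Lhat *ᵥ x) = 0 := by rw [hx, dotProduct_zero]
      rw [hLhat, ← Matrix.mulVec_mulVec, ← Matrix.mulVec_mulVec,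
        Matrix.dotProduct_mulVec x U1ᵀ, Matrix.vecMul_transpose] at this
      exact this
    have h2 : Bᵀ *ᵥ u = 0 := by
      rw [hL, ← Matrix.mulVec_mulVec, Matrix.dotProduct_mulVec u B,
        ← Matrix.mulVec_transpose, dotProduct_self_eq_zero] at h1
      exact h1
    have hconst := hker u h2
    have hsum : ∑ i, u i = 0 := by
      have : (fun _ => (1 : ℝ)) ⬝ᵥ u = ((fun _ => (1 : ℝ)) ᵥ* U1) ⬝ᵥ x := by
        rw [hu, Matrix.dotProduct_mulVec]
      rw [← Matrix.mulVec_transpose, hU1one, zero_dotProduct] at this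
      simpa [dotProduct] using this
    have i0 : Fin n := ⟨0, by omega⟩
    have hu0 : ∀ i, u i = u i0 := fun i => hconst i i0
    have : (n : ℝ) * u i0 = 0 := by
      rw [← hsum, Finset.sum_congr rfl (fun i _ => hu0 i)]
      simp [mul_comm]
    have huz : u = 0 := by
      funext i
      rw [hu0 i, Pi.zero_apply]
      exact (mul_eq_zero.mp this).resolve_left hn0
    apply hx0
    have : (U1ᵀ * U1) *ᵥ x = 0 := by
      rw [← Matrix.mulVec_mulVec, ← hu, huz, Matrix.mulVec_zero]
    rwa [hU1, Matrix.one_mulVec] at this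
  -- completion of U1 to an orthogonal matrix : U1 * U1ᵀ = 1 - (1/n) J
  have e : Fin n ≃ Fin (n - 1) ⊕ Fin 1 :=
    ((finCongr (by omega : n = n - 1 + 1)).trans finSumFinEquiv.symm)
  set C : Matrix (Fin n) (Fin 1) ℝ := fun _ _ => 1 with hC
  set R : Matrix (Fin 1) (Fin n) ℝ := fun _ _ => (n : ℝ)⁻¹ with hR
  have hRC : Matrix.fromRows U1ᵀ R * Matrix.fromCols U1 C = 1 := by
    rw [Matrix.fromRows_mul_fromCols]
    have h1 : U1ᵀ * C = 0 := by
      ext k u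
      simp only [Matrix.mul_apply]
      have := congrFun hU1one k
      simpa [Matrix.mul_apply, Matrix.mulVec, dotProduct, hC] using this
    have h2 : R * U1 = 0 := by
      ext u j
      simp only [Matrix.mul_apply]
      have := congrFun hU1one j
      simp only [Matrix.mulVec, dotProduct, Matrix.transpose_apply, mul_one,
        Pi.zero_apply] at this
      simp [Matrix.mul_apply, hR, ← Finset.mul_sum, this]
    have h3 : R * C = 1 := by
      ext u v
      simp only [Matrix.mul_apply]
      simp [Matrix.mul_apply, hR, hC, Matrix.one_apply, Finset.card_univ,
        Fin.eq_zero u, Fin.eq_zero v, inv_mul_cancel₀ hn0, mul_inv_cancel₀ hn0]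
    rw [hU1, h1, h2, h3, Matrix.fromBlocks_one]
  have hUUt : U1 * U1ᵀ + C * R = 1 := by
    rw [← Matrix.fromCols_mul_fromRows,
      (Matrix.fromCols_mul_fromRows_eq_one_comm e U1 C U1ᵀ R).mpr hRC]
  -- L * (1/n J) = 0 hence U1 U1ᵀ absorbs L
  have hLCR : L * (C * R) = 0 := by
    ext i j
    simp only [Matrix.mul_apply]
    have := congrFun hLone i
    simp only [Matrix.mulVec, dotProduct, mul_one, Pi.zero_apply] at this
    simp [Matrix.mul_apply, hC, hR, Fin.sum_univ_one, ← Finset.sum_mul, this]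
  have habsorb : L * (U1 * U1ᵀ) = L := by
    have : L * (U1 * U1ᵀ + C * R) = L * 1 := by rw [hUUt]
    rw [Matrix.mul_add, hLCR, add_zero, Matrix.mul_one] at this
    exact this
  have h9 : U1 * (U1ᵀ * L) = L := by
    have := congrArg Matrix.transpose habsorb
    simpa [Matrix.transpose_mul, Matrix.transpose_transpose, hLt, Matrix.mul_assoc] using this
  have habsorb' : U1 * (U1ᵀ * (L * U1)) = L * U1 := by
    calc U1 * (U1ᵀ * (L * U1)) = (U1 * (U1ᵀ * L)) * U1 := by simp only [Matrix.mul_assoc]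
      _ = L * U1 := by rw [h9]
  -- symmetric Lhat and key product identities
  have hLhat_symm : Lhatᵀ = Lhat := by
    rw [hLhat]
    simp [Matrix.transpose_mul, Matrix.transpose_transpose, hLt, Matrix.mul_assoc]
  have hinv1 : Lhat * Lhat⁻¹ = 1 := Matrix.mul_nonsing_inv _ hdet
  have hinv2 : Lhat⁻¹ * Lhat = 1 := Matrix.nonsing_inv_mul _ hdet
  have hfact1 : (L * U1)ᵀ * U1 = Lhat := by
    rw [Matrix.transpose_mul, hLt, hLhat, Matrix.mul_assoc]
  have hfact2 : U1ᵀ * (L * U1) = Lhat := by rw [hLhat, Matrix.mul_assoc]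
  have hfact3 : (L * U1)ᵀ * (L * U1) = Lhat * Lhat := by
    calc (L * U1)ᵀ * (L * U1) = U1ᵀ * (L * (L * U1)) := by
          rw [Matrix.transpose_mul, hLt, Matrix.mul_assoc]
      _ = U1ᵀ * (L * (U1 * (U1ᵀ * (L * U1)))) := by rw [habsorb']
      _ = Lhat * Lhat := by
          rw [hLhat]; simp only [Matrix.mul_assoc]
  -- final block computation
  rw [hAhat, hC1hat, hX1, Matrix.fromBlocks_transpose, Matrix.fromBlocks_multiply,
    Matrix.fromBlocks_multiply, Matrix.transpose_fromCols, Matrix.fromRows_mul_fromCols,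
    Matrix.fromBlocks_add, Matrix.fromBlocks_add, ← Matrix.fromBlocks_zero]
  rw [Matrix.fromBlocks_inj]
  refine ⟨?_, ?_, ?_, ?_⟩ <;>
  · simp only [Matrix.transpose_neg, Matrix.transpose_smul, Matrix.transpose_one,
      Matrix.transpose_zero, hLhat_symm, Matrix.neg_mul, Matrix.mul_neg,
      Matrix.mul_add, Matrix.add_mul, Matrix.smul_mul, Matrix.mul_smul, smul_add, smul_zero, hU1,
      Matrix.mul_one, Matrix.one_mul, Matrix.zero_mul, Matrix.mul_zero, smul_smul,
      hinv1, hinv2, hfact1, hfact2, hfact3, neg_neg, add_zero, zero_add, smul_neg, neg_smul]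
    match_scalars <;> field_simp <;> ring
end

section
/- The matrix X₂ = [[ (1/(2a)) I, 0 ], [ 0, (b/(2a)) L̂⁻¹ ]] satisfies the Lyapunov equation Âᵀ X₂ + X₂ Â + Ĉ₂ᵀ Ĉ₂ = 0. -/
open Matrix MeasureTheory Filter Topology

theorem stmt4
    (n m : ℕ) (hn : 2 ≤ n)
    (G : SimpleGraph (Fin n)) (hG : G.Connected)
    (src tgt : Fin m → Fin n)
    (hadj : ∀ l, G.Adj (src l) (tgt l))
    (hinj : ∀ l l' : Fin m, s(src l, tgt l) = s(src l', tgt l') → l = l')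
    (hsurj : ∀ e ∈ G.edgeSet, ∃ l : Fin m, s(src l, tgt l) = e)
    (B : Matrix (Fin n) (Fin m) ℝ)
    (hB : ∀ i l, B i l = if i = src l then (1 : ℝ) else if i = tgt l then -1 else 0)
    (L : Matrix (Fin n) (Fin n) ℝ) (hL : L = B * Bᵀ)
    (U1 : Matrix (Fin n) (Fin (n - 1)) ℝ)
    (hU1 : U1ᵀ * U1 = 1)
    (hU1one : U1ᵀ *ᵥ (fun _ => (1 : ℝ)) = 0)
    (Lhat : Matrix (Fin (n - 1)) (Fin (n - 1)) ℝ) (hLhat : Lhat = U1ᵀ * L * U1)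
    (a b : ℝ) (ha : 0 < a) (hb : 0 < b)
    (Ahat : Matrix (Fin (n - 1) ⊕ Fin (n - 1)) (Fin (n - 1) ⊕ Fin (n - 1)) ℝ)
    (hAhat : Ahat = Matrix.fromBlocks (-(a • Lhat)) (b • (1 : Matrix (Fin (n - 1)) (Fin (n - 1)) ℝ)) (-Lhat) 0)
    (C2hat : Matrix (Fin m) (Fin (n - 1) ⊕ Fin (n - 1)) ℝ)
    (hC2hat : C2hat = Matrix.fromCols (-(Bᵀ * U1)) 0)
    (X2 : Matrix (Fin (n - 1) ⊕ Fin (n - 1)) (Fin (n - 1) ⊕ Fin (n - 1)) ℝ)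
    (hX2 : X2 = Matrix.fromBlocks
      ((1 / (2 * a)) • (1 : Matrix (Fin (n - 1)) (Fin (n - 1)) ℝ)) 0 0
      ((b / (2 * a)) • Lhat⁻¹))
    :
    Ahatᵀ * X2 + X2 * Ahat + C2hatᵀ * C2hat = 0 := by
  have ha0 : a ≠ 0 := ne_of_gt ha
  set M : Matrix (Fin m) (Fin (n - 1)) ℝ := Bᵀ * U1 with hM
  have hLhat' : Lhat = Mᵀ * M := by
    rw [hLhat, hL, hM, transpose_mul, transpose_transpose]
    simp only [Matrix.mul_assoc]
  have hsymm : Lhatᵀ = Lhat := by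
    rw [hLhat']; simp [transpose_mul]
  -- Invertibility of Lhat
  have hker : ∀ x : Fin (n - 1) → ℝ, Lhat *ᵥ x = 0 → x = 0 := by
    intro x hx
    have h1 : (M *ᵥ x) ⬝ᵥ (M *ᵥ x) = 0 := by
      have h0 : x ⬝ᵥ (Lhat *ᵥ x) = 0 := by rw [hx]; simp
      rwa [hLhat', ← mulVec_mulVec, dotProduct_mulVec, vecMul_transpose] at h0
    have h2 : M *ᵥ x = 0 := dotProduct_self_eq_zero.mp h1
    set v : Fin n → ℝ := U1 *ᵥ x with hv
    have h3 : Bᵀ *ᵥ v = 0 := by rwa [hv, mulVec_mulVec, ← hM]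
    have hedge : ∀ l, v (src l) = v (tgt l) := by
      intro l
      have hl := congrFun h3 l
      have hne : src l ≠ tgt l := (hadj l).ne
      have heq : ∀ i, Bᵀ l i * v i =
          (if i = src l then v i else 0) - (if i = tgt l then v i else 0) := by
        intro i
        rw [transpose_apply, hB]
        by_cases h1' : i = src l
        · by_cases h2' : i = tgt l
          · exact absurd (h1'.symm.trans h2') hne
          · simp [h1', h2', hne]
        · by_cases h2' : i = tgt l
          · simp [h1', h2', Ne.symm hne]
          · simp [h1', h2']
      rw [Matrix.mulVec, dotProduct] at hl
      simp only [heq, Finset.sum_sub_distrib, Finset.sum_ite_eq',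
        Finset.mem_univ, if_true, Pi.zero_apply] at hl
      linarith
    have hAdjEq : ∀ u w : Fin n, G.Adj u w → v u = v w := by
      intro u w h
      obtain ⟨l, hl⟩ := hsurj s(u, w) (G.mem_edgeSet.mpr h)
      rcases Sym2.eq_iff.mp hl with ⟨h1', h2'⟩ | ⟨h1', h2'⟩
      · rw [← h1', ← h2']; exact hedge l
      · rw [← h1', ← h2']; exact (hedge l).symm
    have hconst : ∀ u w : Fin n, v u = v w := by
      intro u w
      obtain ⟨p⟩ := hG u w
      induction p with
      | nil => rfl
      | cons h p ih => exact (hAdjEq _ _ h).trans ih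
    have i0 : Fin n := ⟨0, by omega⟩
    have hvconst : v = (v i0) • (fun _ => (1 : ℝ)) := by
      funext i
      simp [hconst i i0]
    have hzero : U1ᵀ *ᵥ v = 0 := by
      rw [hvconst, Matrix.mulVec_smul, hU1one, smul_zero]
    calc x = (U1ᵀ * U1) *ᵥ x := by rw [hU1, one_mulVec]
    _ = U1ᵀ *ᵥ v := by rw [← mulVec_mulVec, hv]
    _ = 0 := hzero
  have hunit : IsUnit Lhat := by
    rw [← Matrix.mulVec_injective_iff_isUnit]
    intro x y hxy
    have : Lhat *ᵥ (x - y) = 0 := by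
      rw [Matrix.mulVec_sub, hxy, sub_self]
    exact sub_eq_zero.mp (hker _ this)
  have hdet : IsUnit Lhat.det := (Matrix.isUnit_iff_isUnit_det _).mp hunit
  have hinv1 : Lhat * Lhat⁻¹ = 1 := Matrix.mul_nonsing_inv _ hdet
  have hinv2 : Lhat⁻¹ * Lhat = 1 := Matrix.nonsing_inv_mul _ hdet
  -- Final algebra
  have hhalf : (1 / (2 * a)) * a = 1 / 2 := by field_simp
  have hba : (1 / (2 * a)) * b = b / (2 * a) := by ring
  rw [hAhat, hC2hat, hX2, transpose_fromCols, fromRows_mul_fromCols,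
    fromBlocks_transpose, fromBlocks_multiply, fromBlocks_multiply, fromBlocks_add,
    fromBlocks_add, ← fromBlocks_zero, fromBlocks_inj]
  refine ⟨?_, ?_, ?_, ?_⟩
  · simp only [transpose_neg, transpose_smul, transpose_one, transpose_zero, hsymm,
      Matrix.neg_mul, Matrix.mul_neg, neg_neg, Matrix.smul_mul, Matrix.mul_smul,
      Matrix.one_mul, Matrix.mul_one, Matrix.zero_mul, Matrix.mul_zero, add_zero,
      zero_add, smul_smul, hhalf, ← hLhat']
    match_scalars <;> field_simp <;> ring
  · simp only [transpose_neg, transpose_smul, transpose_one, transpose_zero, hsymm,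
      Matrix.neg_mul, Matrix.mul_neg, neg_neg, Matrix.smul_mul, Matrix.mul_smul,
      Matrix.one_mul, Matrix.mul_one, Matrix.zero_mul, Matrix.mul_zero, add_zero,
      zero_add, smul_smul, hhalf, hba, hinv1]
    match_scalars <;> field_simp <;> ring
  · simp only [transpose_neg, transpose_smul, transpose_one, transpose_zero, hsymm,
      Matrix.neg_mul, Matrix.mul_neg, neg_neg, Matrix.smul_mul, Matrix.mul_smul,
      Matrix.one_mul, Matrix.mul_one, Matrix.zero_mul, Matrix.mul_zero, add_zero,
      zero_add, smul_smul, hhalf, hba, hinv2]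
    match_scalars <;> field_simp <;> ring
  · simp
end

section
/- All frequencies converge to the average frequency and the relative buffer occupancies tend to zero: ω(t) → ω^avg 𝟏 and δ(t) → 0 as t → ∞. -/
open Matrix MeasureTheory Filter Topology



lemma myDotNonneg {k : ℕ} (v : Fin k → ℝ) : 0 ≤ v ⬝ᵥ v :=
  Finset.sum_nonneg fun i _ => mul_self_nonneg _

lemma myDeriv_dot {k : ℕ} {f g : ℝ → Fin k → ℝ} {f' g' : Fin k → ℝ} {t : ℝ}
    (hf : HasDerivAt f f' t) (hg : HasDerivAt g g' t) :
    HasDerivAt (fun s => f s ⬝ᵥ g s) (f' ⬝ᵥ g t + f t ⬝ᵥ g') t := by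
  have hf' := hasDerivAt_pi.1 hf
  have hg' := hasDerivAt_pi.1 hg
  have h : HasDerivAt (fun s => ∑ i, f s i * g s i)
      (∑ i, (f' i * g t i + f t i * g' i)) t :=
    HasDerivAt.fun_sum (fun i _ => (hf' i).mul (hg' i))
  simpa [dotProduct, Finset.sum_add_distrib] using h

lemma myDeriv_mulVec {k k' : ℕ} {f : ℝ → Fin k → ℝ} {f' : Fin k → ℝ} {t : ℝ}
    (M : Matrix (Fin k') (Fin k) ℝ) (hf : HasDerivAt f f' t) :
    HasDerivAt (fun s => M *ᵥ f s) (M *ᵥ f') t := by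
  rw [hasDerivAt_pi]
  intro i
  have hf' := hasDerivAt_pi.1 hf
  have h : HasDerivAt (fun s => ∑ j, M i j * f s j) (∑ j, M i j * f' j) t :=
    HasDerivAt.fun_sum (fun j _ => (hf' j).const_mul (M i j))
  simpa [Matrix.mulVec, dotProduct] using h

lemma myConst_of_deriv_zero {E : Type*} [NormedAddCommGroup E] [NormedSpace ℝ E] {f : ℝ → E}
    (hf : ∀ t, 0 ≤ t → HasDerivAt f 0 t) : ∀ t, 0 ≤ t → f t = f 0 := by
  intro t ht
  have hc : ContinuousOn f (Set.Icc 0 t) := fun s hs =>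
    ((hf s hs.1).continuousAt).continuousWithinAt
  exact constant_of_has_deriv_right_zero hc
    (fun s hs => ((hf s hs.1).hasDerivWithinAt)) t ⟨ht, le_rfl⟩

lemma myExpDecay {f f' : ℝ → ℝ} {γ : ℝ}
    (hd : ∀ t, 0 ≤ t → HasDerivAt f (f' t) t)
    (hle : ∀ t, 0 ≤ t → f' t ≤ -γ * f t) :
    ∀ t, 0 ≤ t → f t ≤ f 0 * Real.exp (-γ * t) := by
  intro t ht
  set g : ℝ → ℝ := fun s => f s * Real.exp (γ * s) with hgdef
  have hgd : ∀ s, 0 ≤ s →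
      HasDerivAt g (f' s * Real.exp (γ * s) + f s * (Real.exp (γ * s) * γ)) s := by
    intro s hs
    have he : HasDerivAt (fun u => Real.exp (γ * u)) (Real.exp (γ * s) * γ) s := by
      simpa using (((hasDerivAt_id s).const_mul γ).exp)
    exact (hd s hs).mul he
  have hanti : AntitoneOn g (Set.Ici 0) := by
    apply antitoneOn_of_deriv_nonpos (convex_Ici 0)
    · exact fun s hs => ((hgd s hs).continuousAt).continuousWithinAt
    · intro s hs
      rw [interior_Ici] at hs
      exact ((hgd s (le_of_lt hs)).differentiableAt).differentiableWithinAt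
    · intro s hs
      rw [interior_Ici] at hs
      rw [(hgd s (le_of_lt hs)).deriv]
      have := hle s (le_of_lt hs)
      nlinarith [Real.exp_pos (γ * s), mul_le_mul_of_nonneg_right this (Real.exp_pos (γ * s)).le]
  have h0 : g t ≤ g 0 := hanti (Set.mem_Ici.2 le_rfl) (Set.mem_Ici.2 ht) ht
  have hg0 : g 0 = f 0 := by simp [hgdef]
  rw [hg0] at h0
  have hev : Real.exp (γ * t) > 0 := Real.exp_pos _
  have : f t = g t * Real.exp (-γ * t) := by
    rw [hgdef]
    simp only []
    rw [mul_assoc, ← Real.exp_add]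
    ring_nf
    simp
  rw [this]
  have := mul_le_mul_of_nonneg_right h0 (Real.exp_pos (-γ * t)).le
  linarith

lemma myWalkConst {n : ℕ} {G : SimpleGraph (Fin n)} (hG : G.Connected) {v : Fin n → ℝ}
    (h : ∀ i j, G.Adj i j → v i = v j) : ∀ i j, v i = v j := by
  intro i j
  obtain ⟨w⟩ := hG.preconnected i j
  induction w with
  | nil => rfl
  | cons hadj p ih => exact (h _ _ hadj).trans ih

lemma myLambda2 {n : ℕ} (hn : 2 ≤ n) (L : Matrix (Fin n) (Fin n) ℝ)
    (hpos : ∀ v : Fin n → ℝ, (∑ i, v i) = 0 → v ≠ 0 → 0 < v ⬝ᵥ (L *ᵥ v)) :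
    ∃ lam > 0, ∀ v : Fin n → ℝ, (∑ i, v i) = 0 → lam * (v ⬝ᵥ v) ≤ v ⬝ᵥ (L *ᵥ v) := by
  set q : (Fin n → ℝ) → ℝ := fun v => v ⬝ᵥ (L *ᵥ v) with hqdef
  have hq : Continuous q := by
    have : q = fun v => ∑ i, v i * ∑ j, L i j * v j := by
      funext v
      simp [hqdef, dotProduct, Matrix.mulVec]
    rw [this]
    apply continuous_finset_sum
    intro i _
    exact (continuous_apply i).mul
      (continuous_finset_sum _ fun j _ => continuous_const.mul (continuous_apply j))
  set S : Set (Fin n → ℝ) := {v | (∑ i, v i) = 0 ∧ v ⬝ᵥ v = 1} with hSdef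
  have hSclosed : IsClosed S := by
    apply IsClosed.inter
    · exact isClosed_eq (continuous_finset_sum _ fun i _ => continuous_apply i) continuous_const
    · exact isClosed_eq
        (continuous_finset_sum _ fun i _ => (continuous_apply i).mul (continuous_apply i))
        continuous_const
  have hSsub : S ⊆ Metric.closedBall 0 1 := by
    intro v hv
    rw [Metric.mem_closedBall, dist_zero_right]
    rw [pi_norm_le_iff_of_nonneg zero_le_one]
    intro i
    rw [Real.norm_eq_abs, abs_le_one_iff_mul_self_le_one]
    calc v i * v i ≤ ∑ j, v j * v j :=
          Finset.single_le_sum (fun j _ => mul_self_nonneg (v j)) (Finset.mem_univ i)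
      _ = 1 := hv.2
  have hScompact : IsCompact S :=
    (isCompact_closedBall (0 : Fin n → ℝ) 1).of_isClosed_subset hSclosed hSsub
  have h0 : (0 : ℕ) < n := by omega
  have h1 : (1 : ℕ) < n := by omega
  set i0 : Fin n := ⟨0, h0⟩
  set i1 : Fin n := ⟨1, h1⟩
  have hne01 : i0 ≠ i1 := by simp [i0, i1, Fin.ext_iff]
  have hne10 : i1 ≠ i0 := hne01.symm
  set c : ℝ := Real.sqrt 2⁻¹ with hcdef
  have hcc : c * c = 2⁻¹ := Real.mul_self_sqrt (by norm_num)
  set v0 : Fin n → ℝ := fun i => if i = i0 then c else if i = i1 then -c else 0 with hv0def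
  have hv0sum : (∑ i, v0 i) = 0 := by
    have : ∀ i, v0 i = (if i = i0 then c else 0) + (if i = i1 then -c else 0) := by
      intro i
      by_cases h : i = i0
      · subst h; simp [v0, hne01]
      · by_cases h' : i = i1
        · subst h'; simp [v0, hne10]
        · simp [v0, h, h']
    simp only [this, Finset.sum_add_distrib, Finset.sum_ite_eq' Finset.univ,
      Finset.mem_univ, if_true]
    ring
  have hv0dot : v0 ⬝ᵥ v0 = 1 := by
    have : ∀ i, v0 i * v0 i = (if i = i0 then c * c else 0) + (if i = i1 then c * c else 0) := by
      intro i
      by_cases h : i = i0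
      · subst h; simp [v0, hne01]
      · by_cases h' : i = i1
        · subst h'; simp [v0, hne10]
        · simp [v0, h, h']
    rw [dotProduct]
    simp only [this, Finset.sum_add_distrib, Finset.sum_ite_eq' Finset.univ,
      Finset.mem_univ, if_true, hcc]
    norm_num
  have hSne : S.Nonempty := ⟨v0, hv0sum, hv0dot⟩
  obtain ⟨vs, hvsS, hmin⟩ := hScompact.exists_isMinOn hSne hq.continuousOn
  have hvsne : vs ≠ 0 := by
    intro h
    have := hvsS.2
    rw [h] at this
    simp [dotProduct] at this
  refine ⟨q vs, hpos vs hvsS.1 hvsne, ?_⟩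
  intro v hv
  by_cases hv0 : v = 0
  · subst hv0
    simp [hqdef]
  · have hvv : 0 < v ⬝ᵥ v := by
      obtain ⟨i, hi⟩ := Function.ne_iff.1 hv0
      have h1' : 0 < v i * v i := mul_self_pos.2 hi
      have h2' : v i * v i ≤ v ⬝ᵥ v :=
        Finset.single_le_sum (fun j _ => mul_self_nonneg (v j)) (Finset.mem_univ i)
      linarith
    set r : ℝ := Real.sqrt (v ⬝ᵥ v) with hrdef
    have hr : 0 < r := Real.sqrt_pos.2 hvv
    have hrr : r * r = v ⬝ᵥ v := Real.mul_self_sqrt hvv.le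
    set w : Fin n → ℝ := r⁻¹ • v with hwdef
    have hwsum : (∑ i, w i) = 0 := by
      simp [hwdef, ← Finset.mul_sum, hv]
    have hwdot : w ⬝ᵥ w = 1 := by
      have h' : w ⬝ᵥ w = r⁻¹ * (r⁻¹ * (v ⬝ᵥ v)) := by
        simp [hwdef, smul_dotProduct, dotProduct_smul, smul_eq_mul]
      rw [h', ← hrr]
      field_simp
    have hqw : q w = r⁻¹ * (r⁻¹ * q v) := by
      simp [hqdef, hwdef, Matrix.mulVec_smul, smul_dotProduct,
        dotProduct_smul, smul_eq_mul]
    have hle : q vs ≤ q w := hmin ⟨hwsum, hwdot⟩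
    have hfin : q w * (v ⬝ᵥ v) = q v := by
      rw [hqw, ← hrr]
      field_simp
    calc q vs * (v ⬝ᵥ v) ≤ q w * (v ⬝ᵥ v) := mul_le_mul_of_nonneg_right hle hvv.le
      _ = q v := hfin


set_option maxHeartbeats 1000000 in
theorem stmt11
    (n m : ℕ) (hn : 2 ≤ n)
    (G : SimpleGraph (Fin n)) (hG : G.Connected)
    (src tgt : Fin m → Fin n)
    (hadj : ∀ l, G.Adj (src l) (tgt l))
    (hinj : ∀ l l' : Fin m, s(src l, tgt l) = s(src l', tgt l') → l = l')
    (hsurj : ∀ e ∈ G.edgeSet, ∃ l : Fin m, s(src l, tgt l) = e)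
    (B : Matrix (Fin n) (Fin m) ℝ)
    (hB : ∀ i l, B i l = if i = src l then (1 : ℝ) else if i = tgt l then -1 else 0)
    (L : Matrix (Fin n) (Fin n) ℝ) (hL : L = B * Bᵀ)
    (a b : ℝ) (ha : 0 < a) (hb : 0 < b)
    (ωu : Fin n → ℝ)
    (A : Matrix (Fin n ⊕ Fin n) (Fin n ⊕ Fin n) ℝ)
    (hA : A = Matrix.fromBlocks (-(a • L)) (b • (1 : Matrix (Fin n) (Fin n) ℝ)) (-L) 0)
    (B2 : Matrix (Fin n ⊕ Fin n) (Fin n) ℝ)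
    (hB2 : B2 = Matrix.fromRows (1 : Matrix (Fin n) (Fin n) ℝ) 0)
    (C1 : Matrix (Fin n) (Fin n ⊕ Fin n) ℝ)
    (hC1 : C1 = Matrix.fromCols (-(a • L)) (b • (1 : Matrix (Fin n) (Fin n) ℝ)))
    (C2 : Matrix (Fin m) (Fin n ⊕ Fin n) ℝ)
    (hC2 : C2 = Matrix.fromCols (-Bᵀ) 0)
    (x : ℝ → (Fin n ⊕ Fin n) → ℝ)
    (hx0 : x 0 = 0)
    (hx : ∀ t : ℝ, 0 ≤ t → HasDerivAt x (A *ᵥ x t + B2 *ᵥ ωu) t)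
    (ω : ℝ → Fin n → ℝ) (hω : ∀ t, ω t = C1 *ᵥ x t + ωu)
    (δ : ℝ → Fin m → ℝ) (hδ : ∀ t, δ t = C2 *ᵥ x t)
    (ωavg : ℝ) (hωavg : ωavg = (1 / (n : ℝ)) * ∑ i, ωu i)
    (ωss : Fin n → ℝ) (hωss : ωss = fun _ => ωavg)
    :
    Tendsto ω atTop (𝓝 ωss) ∧ Tendsto δ atTop (𝓝 0) := by
  have hnR : (0 : ℝ) < n := by exact_mod_cast (by omega : 0 < n)
  have hsrcne : ∀ l, src l ≠ tgt l := fun l => (hadj l).ne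
  -- column sums of B vanish
  have hBsplit : ∀ i l, B i l =
      (if i = src l then (1:ℝ) else 0) + (if i = tgt l then -1 else 0) := by
    intro i l
    rw [hB]
    by_cases h : i = src l
    · subst h; simp [hsrcne l]
    · by_cases h' : i = tgt l
      · subst h'; simp [h, (Ne.symm (hsrcne l))]
      · simp [h, h']
  have hBsum : ∀ l, (∑ i, B i l) = 0 := by
    intro l
    simp only [hBsplit, Finset.sum_add_distrib, Finset.sum_ite_eq' Finset.univ,
      Finset.mem_univ, if_true]
    ring
  have hBtconst : ∀ s : ℝ, (Bᵀ *ᵥ fun _ => s) = 0 := by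
    intro s
    funext l
    simp only [Matrix.mulVec, dotProduct, Matrix.transpose_apply, Pi.zero_apply,
      ← Finset.sum_mul]
    rw [hBsum l, zero_mul]
  have hBtv : ∀ (v : Fin n → ℝ) l, (Bᵀ *ᵥ v) l = v (src l) - v (tgt l) := by
    intro v l
    simp only [Matrix.mulVec, dotProduct, Matrix.transpose_apply, hBsplit, add_mul]
    rw [Finset.sum_add_distrib]
    have h1 : (∑ i, (if i = src l then (1:ℝ) else 0) * v i) = v (src l) := by
      rw [Finset.sum_congr rfl (fun i _ => by rw [ite_mul, one_mul, zero_mul])]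
      simp [Finset.sum_ite_eq' Finset.univ]
    have h2 : (∑ i, (if i = tgt l then (-1:ℝ) else 0) * v i) = -v (tgt l) := by
      rw [Finset.sum_congr rfl (fun i _ => by rw [ite_mul, neg_one_mul, zero_mul])]
      simp [Finset.sum_ite_eq' Finset.univ]
    rw [h1, h2]
    ring
  have hLconst : ∀ s : ℝ, (L *ᵥ fun _ => s) = 0 := by
    intro s
    rw [hL, ← Matrix.mulVec_mulVec, hBtconst, Matrix.mulVec_zero]
  have hLsym : Lᵀ = L := by
    rw [hL, Matrix.transpose_mul, Matrix.transpose_transpose]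
  have hdotL : ∀ p w : Fin n → ℝ, p ⬝ᵥ (L *ᵥ w) = (L *ᵥ p) ⬝ᵥ w := by
    intro p w
    rw [dotProduct_mulVec, ← Matrix.mulVec_transpose, hLsym]
  have hsumL : ∀ v : Fin n → ℝ, (∑ i, (L *ᵥ v) i) = 0 := by
    intro v
    have h1 : (∑ i, (L *ᵥ v) i) = (fun _ => (1:ℝ)) ⬝ᵥ (L *ᵥ v) := by
      simp [dotProduct]
    rw [h1, hdotL, hLconst, zero_dotProduct]
  have hLBB : ∀ p : Fin n → ℝ, p ⬝ᵥ (L *ᵥ p) = (Bᵀ *ᵥ p) ⬝ᵥ (Bᵀ *ᵥ p) := by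
    intro p
    rw [hL, ← Matrix.mulVec_mulVec, dotProduct_mulVec, ← Matrix.mulVec_transpose]
  have hQnonneg : ∀ p : Fin n → ℝ, 0 ≤ p ⬝ᵥ (L *ᵥ p) := by
    intro p
    rw [hLBB]
    exact myDotNonneg _
  -- positivity on the subspace
  have hQpos : ∀ v : Fin n → ℝ, (∑ i, v i) = 0 → v ≠ 0 → 0 < v ⬝ᵥ (L *ᵥ v) := by
    intro v hsum hne
    rcases lt_or_eq_of_le (hQnonneg v) with h | h
    · exact h
    exfalso
    have hBv : ∀ l, (Bᵀ *ᵥ v) l = 0 := by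
      intro l
      have h0 : (∑ l', (Bᵀ *ᵥ v) l' * (Bᵀ *ᵥ v) l') = 0 := by
        have h2 := hLBB v
        rw [← h] at h2
        exact h2.symm
      have h3 := (Finset.sum_eq_zero_iff_of_nonneg
        (fun l' _ => mul_self_nonneg ((Bᵀ *ᵥ v) l'))).1 h0 l (Finset.mem_univ l)
      exact mul_self_eq_zero.1 h3
    have hadjv : ∀ i j, G.Adj i j → v i = v j := by
      intro i j hij
      obtain ⟨l, hl⟩ := hsurj s(i,j) ((SimpleGraph.mem_edgeSet G).2 hij)
      have hsl := hBv l
      rw [hBtv] at hsl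
      rcases Sym2.eq_iff.1 hl with ⟨h1, h2⟩ | ⟨h1, h2⟩
      · rw [← h1, ← h2]; linarith
      · rw [← h1, ← h2]; linarith
    have hconst : ∀ i j, v i = v j := myWalkConst hG hadjv
    apply hne
    funext i
    have hv0 : (∑ j, v j) = (n : ℝ) * v i := by
      rw [Finset.sum_congr rfl (fun j _ => hconst j i)]
      simp [Finset.card_univ, mul_comm]
    rw [hsum] at hv0
    have hvi : v i = 0 := by
      rcases mul_eq_zero.1 hv0.symm with h' | h'
      · exact absurd h' hnR.ne'
      · exact h'
    simpa using hvi
  obtain ⟨lam, hlam, hlamle⟩ := myLambda2 hn L hQpos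
  -- shifted trajectory
  set ψ : ℝ → (Fin n ⊕ Fin n) → ℝ :=
    fun t => Sum.elim (fun _ => ωavg * t) (fun i => (ωavg - ωu i) / b) with hψdef
  set z : ℝ → (Fin n ⊕ Fin n) → ℝ := fun t => x t - ψ t with hzdef
  set z1 : ℝ → Fin n → ℝ := fun t i => z t (Sum.inl i) with hz1def
  set z2 : ℝ → Fin n → ℝ := fun t i => z t (Sum.inr i) with hz2def
  have hψd : ∀ t : ℝ, HasDerivAt ψ (Sum.elim (fun _ => ωavg) (fun _ => (0:ℝ))) t := by
    intro t
    rw [hasDerivAt_pi]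
    intro i
    cases i with
    | inl i =>
      simpa [ψ] using ((hasDerivAt_id t).const_mul ωavg)
    | inr i =>
      simpa [ψ] using (hasDerivAt_const t ((ωavg - ωu i) / b))
  have hAψ : ∀ t : ℝ, A *ᵥ ψ t + B2 *ᵥ ωu = Sum.elim (fun _ => ωavg) (fun _ => (0:ℝ)) := by
    intro t
    rw [hA, hB2, Matrix.fromBlocks_mulVec, Matrix.fromRows_mulVec]
    have hc1 : ψ t ∘ Sum.inl = (fun _ => ωavg * t) := rfl
    have hc2 : ψ t ∘ Sum.inr = (fun i => (ωavg - ωu i) / b) := rfl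
    rw [hc1, hc2]
    funext j
    cases j with
    | inl i =>
      simp only [Sum.elim_inl, Pi.add_apply, Matrix.neg_mulVec, Matrix.smul_mulVec,
        hLconst, Matrix.one_mulVec, smul_zero, neg_zero, zero_add, Pi.zero_apply,
        Pi.smul_apply, smul_eq_mul]
      field_simp
      ring
    | inr i =>
      simp only [Sum.elim_inr, Pi.add_apply, Matrix.neg_mulVec, Matrix.zero_mulVec,
        hLconst, neg_zero, Pi.zero_apply, add_zero]
  have hzd : ∀ t : ℝ, 0 ≤ t → HasDerivAt z (A *ᵥ z t) t := by
    intro t ht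
    have h1 := (hx t ht).sub (hψd t)
    have h2 : A *ᵥ z t = (A *ᵥ x t + B2 *ᵥ ωu) - Sum.elim (fun _ => ωavg) (fun _ => (0:ℝ)) := by
      rw [← hAψ t, hzdef]
      simp only [Matrix.mulVec_sub]
      abel
    rw [h2]
    exact h1
  -- block structure of A *ᵥ z t
  have hDz1 : ∀ t : ℝ, (fun i => (A *ᵥ z t) (Sum.inl i))
      = -(a • (L *ᵥ z1 t)) + b • z2 t := by
    intro t
    rw [hA, show z t = Sum.elim (z t ∘ Sum.inl) (z t ∘ Sum.inr) from (Sum.elim_comp_inl_inr _).symm,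
      Matrix.fromBlocks_mulVec]
    have hzc : z t ∘ Sum.inl = z1 t := rfl
    have hzc2 : z t ∘ Sum.inr = z2 t := rfl
    rw [hzc, hzc2]
    funext i
    simp [Matrix.neg_mulVec, Matrix.smul_mulVec, Matrix.one_mulVec]
  have hDz2 : ∀ t : ℝ, (fun i => (A *ᵥ z t) (Sum.inr i)) = -(L *ᵥ z1 t) := by
    intro t
    rw [hA, show z t = Sum.elim (z t ∘ Sum.inl) (z t ∘ Sum.inr) from (Sum.elim_comp_inl_inr _).symm,
      Matrix.fromBlocks_mulVec]
    have hzc : z t ∘ Sum.inl = z1 t := rfl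
    rw [hzc]
    funext i
    simp [Matrix.neg_mulVec, Matrix.zero_mulVec]
  have hz1d : ∀ t : ℝ, 0 ≤ t → HasDerivAt z1 (-(a • (L *ᵥ z1 t)) + b • z2 t) t := by
    intro t ht
    have h := hasDerivAt_pi.1 (hzd t ht)
    have h2 : HasDerivAt z1 (fun i => (A *ᵥ z t) (Sum.inl i)) t :=
      hasDerivAt_pi.2 (fun i => h (Sum.inl i))
    rwa [hDz1 t] at h2
  have hz2d : ∀ t : ℝ, 0 ≤ t → HasDerivAt z2 (-(L *ᵥ z1 t)) t := by
    intro t ht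
    have h := hasDerivAt_pi.1 (hzd t ht)
    have h2 : HasDerivAt z2 (fun i => (A *ᵥ z t) (Sum.inr i)) t :=
      hasDerivAt_pi.2 (fun i => h (Sum.inr i))
    rwa [hDz2 t] at h2
  -- conservation: sums stay zero
  have hnωavg : (n : ℝ) * ωavg = ∑ i, ωu i := by
    rw [hωavg]
    field_simp
  have hS2zero : ∀ t : ℝ, 0 ≤ t → (∑ i, z2 t i) = 0 := by
    have hder : ∀ t : ℝ, 0 ≤ t → HasDerivAt (fun s => ∑ i, z2 s i) 0 t := by
      intro t ht
      have h := hasDerivAt_pi.1 (hz2d t ht)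
      have h2 := HasDerivAt.fun_sum (fun i (_ : i ∈ Finset.univ) => h i)
      have h3 : (∑ i, (-(L *ᵥ z1 t)) i) = 0 := by
        simp only [Pi.neg_apply, Finset.sum_neg_distrib]
        rw [hsumL (z1 t)]
        ring
      rwa [h3] at h2
    intro t ht
    rw [myConst_of_deriv_zero hder t ht]
    have : ∀ i, z2 0 i = -((ωavg - ωu i) / b) := by
      intro i
      simp [z2, z, hx0, ψ]
    rw [Finset.sum_congr rfl (fun i _ => this i)]
    have hterm : ∀ i : Fin n, -((ωavg - ωu i) / b) = (ωu i - ωavg) / b := by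
      intro i; ring
    rw [Finset.sum_congr rfl (fun i _ => hterm i), ← Finset.sum_div, Finset.sum_sub_distrib,
      Finset.sum_const, Finset.card_univ, Fintype.card_fin, nsmul_eq_mul, ← hnωavg]
    simp
  have hS1zero : ∀ t : ℝ, 0 ≤ t → (∑ i, z1 t i) = 0 := by
    have hder : ∀ t : ℝ, 0 ≤ t → HasDerivAt (fun s => ∑ i, z1 s i) 0 t := by
      intro t ht
      have h := hasDerivAt_pi.1 (hz1d t ht)
      have h2 := HasDerivAt.fun_sum (fun i (_ : i ∈ Finset.univ) => h i)
      have h3 : (∑ i, (-(a • (L *ᵥ z1 t)) + b • z2 t) i) = 0 := by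
        simp only [Pi.add_apply, Pi.neg_apply, Pi.smul_apply, smul_eq_mul,
          Finset.sum_add_distrib, Finset.sum_neg_distrib, ← Finset.mul_sum]
        rw [hsumL (z1 t), hS2zero t ht]
        ring
      rwa [h3] at h2
    intro t ht
    rw [myConst_of_deriv_zero hder t ht]
    have : ∀ i, z1 0 i = 0 := by
      intro i
      simp [z1, z, hx0, ψ]
    rw [Finset.sum_congr rfl (fun i _ => this i)]
    simp
  -- Lyapunov constants
  obtain ⟨cc, hccpos, hc1, hc2, hc3⟩ :
      ∃ cc : ℝ, 0 < cc ∧ cc < a * lam ∧ cc ≤ lam / 2 ∧ cc ≤ b / 2 := by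
    refine ⟨min (min (a * lam) lam) b / 2, ?_, ?_, ?_, ?_⟩
    · apply div_pos _ two_pos
      exact lt_min (lt_min (by positivity) hlam) hb
    · have h := le_trans (min_le_left (min (a*lam) lam) b) (min_le_left (a*lam) lam)
      nlinarith [mul_pos ha hlam]
    · have h := le_trans (min_le_left (min (a*lam) lam) b) (min_le_right (a*lam) lam)
      linarith
    · have h := min_le_right (min (a*lam) lam) b
      linarith
  obtain ⟨K1, hK1pos, hK1def⟩ : ∃ K1 : ℝ, 0 < K1 ∧ K1 = 1 + cc / lam :=
    ⟨1 + cc / lam, by positivity, rfl⟩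
  obtain ⟨K2, hK2pos, hK2def⟩ : ∃ K2 : ℝ, 0 < K2 ∧ K2 = b + a * cc + cc :=
    ⟨b + a * cc + cc, by positivity, rfl⟩
  obtain ⟨γ, hγpos, hγ1, hγ2⟩ :
      ∃ γ : ℝ, 0 < γ ∧ γ * K1 ≤ 2*a*lam - 2*cc ∧ γ * K2 ≤ 2*b*cc := by
    refine ⟨min ((2*a*lam - 2*cc)/K1) ((2*b*cc)/K2), ?_, ?_, ?_⟩
    · exact lt_min (div_pos (by linarith) hK1pos) (div_pos (by positivity) hK2pos)
    · calc min ((2*a*lam - 2*cc)/K1) ((2*b*cc)/K2) * K1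
          ≤ ((2*a*lam - 2*cc)/K1) * K1 :=
            mul_le_mul_of_nonneg_right (min_le_left _ _) hK1pos.le
        _ = 2*a*lam - 2*cc := by field_simp
    · calc min ((2*a*lam - 2*cc)/K1) ((2*b*cc)/K2) * K2
          ≤ ((2*b*cc)/K2) * K2 :=
            mul_le_mul_of_nonneg_right (min_le_right _ _) hK2pos.le
        _ = 2*b*cc := by field_simp
  -- derivative of the Lyapunov function
  have hVd : ∀ t : ℝ, 0 ≤ t → HasDerivAt
      (fun s => z1 s ⬝ᵥ (L *ᵥ z1 s) - 2*cc*(z1 s ⬝ᵥ z2 s) + (b + a*cc)*(z2 s ⬝ᵥ z2 s))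
      (-(2*a)*((L *ᵥ z1 t) ⬝ᵥ (L *ᵥ z1 t)) + 2*cc*(z1 t ⬝ᵥ (L *ᵥ z1 t))
        - 2*b*cc*(z2 t ⬝ᵥ z2 t)) t := by
    intro t ht
    have h1 := myDeriv_dot (hz1d t ht) (myDeriv_mulVec L (hz1d t ht))
    have h2 := myDeriv_dot (hz1d t ht) (hz2d t ht)
    have h3 := myDeriv_dot (hz2d t ht) (hz2d t ht)
    have h4 := (h1.sub (h2.const_mul (2*cc))).add (h3.const_mul (b + a*cc))
    convert h4 using 1
    · rfl
    · rfl
    · rfl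
    have e1 : z1 t ⬝ᵥ (L *ᵥ (L *ᵥ z1 t)) = (L *ᵥ z1 t) ⬝ᵥ (L *ᵥ z1 t) := hdotL _ _
    have e2 : z1 t ⬝ᵥ (L *ᵥ z2 t) = (L *ᵥ z1 t) ⬝ᵥ z2 t := hdotL _ _
    have e3 : z2 t ⬝ᵥ (L *ᵥ z1 t) = (L *ᵥ z1 t) ⬝ᵥ z2 t :=
      dotProduct_comm _ _
    have e4 : z2 t ⬝ᵥ z1 t = z1 t ⬝ᵥ z2 t := dotProduct_comm _ _
    simp only [Matrix.mulVec_add, Matrix.mulVec_neg, Matrix.mulVec_smul,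
      add_dotProduct, neg_dotProduct, smul_dotProduct,
      dotProduct_add, dotProduct_neg, dotProduct_smul,
      smul_eq_mul, e1, e2, e3, e4]
    ring
  -- pointwise inequalities
  have hVub : ∀ t : ℝ, 0 ≤ t →
      z1 t ⬝ᵥ (L *ᵥ z1 t) - 2*cc*(z1 t ⬝ᵥ z2 t) + (b + a*cc)*(z2 t ⬝ᵥ z2 t)
        ≤ K1 * (z1 t ⬝ᵥ (L *ᵥ z1 t)) + K2 * (z2 t ⬝ᵥ z2 t) := by
    intro t ht
    have hp := hS1zero t ht
    have hplus : 0 ≤ z1 t ⬝ᵥ z1 t + 2*(z1 t ⬝ᵥ z2 t) + z2 t ⬝ᵥ z2 t := by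
      have h := myDotNonneg (z1 t + z2 t)
      simp only [add_dotProduct, dotProduct_add] at h
      rw [dotProduct_comm (z2 t) (z1 t)] at h
      linarith
    have hQp : lam * (z1 t ⬝ᵥ z1 t) ≤ z1 t ⬝ᵥ (L *ᵥ z1 t) := hlamle _ hp
    have hstep : cc * (z1 t ⬝ᵥ z1 t) ≤ (cc/lam) * (z1 t ⬝ᵥ (L *ᵥ z1 t)) := by
      have hdiv : 0 ≤ cc / lam := le_of_lt (div_pos hccpos hlam)
      have h := mul_le_mul_of_nonneg_left hQp hdiv
      calc cc * (z1 t ⬝ᵥ z1 t) = (cc/lam) * (lam * (z1 t ⬝ᵥ z1 t)) := by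
            field_simp
        _ ≤ _ := h
    rw [hK1def, hK2def]
    nlinarith [mul_nonneg hccpos.le hplus]
  have hVlb : ∀ t : ℝ, 0 ≤ t →
      (lam/2) * (z1 t ⬝ᵥ z1 t) + (b/2) * (z2 t ⬝ᵥ z2 t)
        ≤ z1 t ⬝ᵥ (L *ᵥ z1 t) - 2*cc*(z1 t ⬝ᵥ z2 t) + (b + a*cc)*(z2 t ⬝ᵥ z2 t) := by
    intro t ht
    have hp := hS1zero t ht
    have hminus : 0 ≤ z1 t ⬝ᵥ z1 t - 2*(z1 t ⬝ᵥ z2 t) + z2 t ⬝ᵥ z2 t := by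
      have h := myDotNonneg (z1 t - z2 t)
      simp only [sub_dotProduct, dotProduct_sub] at h
      rw [dotProduct_comm (z2 t) (z1 t)] at h
      linarith
    have hQp : lam * (z1 t ⬝ᵥ z1 t) ≤ z1 t ⬝ᵥ (L *ᵥ z1 t) := hlamle _ hp
    have hpp := myDotNonneg (z1 t)
    have hqq := myDotNonneg (z2 t)
    nlinarith [mul_nonneg hccpos.le hminus,
      mul_nonneg (sub_nonneg.2 hc2) hpp, mul_nonneg (sub_nonneg.2 hc3) hqq,
      mul_nonneg (mul_nonneg ha.le hccpos.le) hqq]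
  -- key spectral estimate
  have hkey : ∀ t : ℝ, 0 ≤ t →
      lam * (z1 t ⬝ᵥ (L *ᵥ z1 t)) ≤ (L *ᵥ z1 t) ⬝ᵥ (L *ᵥ z1 t) := by
    intro t ht
    set p := z1 t
    set u := L *ᵥ z1 t with hu
    have hQ0 : 0 ≤ p ⬝ᵥ u := hQnonneg p
    have hcs : (p ⬝ᵥ u)^2 ≤ (p ⬝ᵥ p) * (u ⬝ᵥ u) := by
      have h := Finset.sum_mul_sq_le_sq_mul_sq Finset.univ p u
      simpa [dotProduct, pow_two] using h
    have hQp : lam * (p ⬝ᵥ p) ≤ p ⬝ᵥ u := hlamle _ (hS1zero t ht)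
    have huu := myDotNonneg u
    rcases eq_or_lt_of_le hQ0 with hQ | hQ
    · rw [← hQ]
      simpa using huu
    · nlinarith [mul_le_mul_of_nonneg_right hQp huu, mul_le_mul_of_nonneg_left hcs hlam.le]
  -- the decay inequality
  have hdVle : ∀ t : ℝ, 0 ≤ t →
      -(2*a)*((L *ᵥ z1 t) ⬝ᵥ (L *ᵥ z1 t)) + 2*cc*(z1 t ⬝ᵥ (L *ᵥ z1 t))
        - 2*b*cc*(z2 t ⬝ᵥ z2 t)
      ≤ -γ * (z1 t ⬝ᵥ (L *ᵥ z1 t) - 2*cc*(z1 t ⬝ᵥ z2 t) + (b + a*cc)*(z2 t ⬝ᵥ z2 t)) := by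
    intro t ht
    have hQ0 := hQnonneg (z1 t)
    have hqq := myDotNonneg (z2 t)
    have hA1 := hkey t ht
    have hB1 := mul_le_mul_of_nonneg_right hγ1 hQ0
    have hB2 := mul_le_mul_of_nonneg_right hγ2 hqq
    have hD := mul_le_mul_of_nonneg_left (hVub t ht) hγpos.le
    nlinarith [mul_le_mul_of_nonneg_left hA1 (by positivity : (0:ℝ) ≤ 2*a)]
  -- exponential decay of V
  have hdecay := myExpDecay hVd hdVle
  have hexp0 : Tendsto (fun t : ℝ => Real.exp (-γ * t)) atTop (𝓝 0) := by
    have h1 : Tendsto (fun t : ℝ => γ * t) atTop atTop :=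
      Tendsto.const_mul_atTop hγpos tendsto_id
    have h2 := Real.tendsto_exp_neg_atTop_nhds_zero.comp h1
    have h3 : ((fun x : ℝ => Real.exp (-x)) ∘ fun t : ℝ => γ * t)
        = fun t : ℝ => Real.exp (-γ * t) := by
      funext t
      simp [Function.comp, neg_mul]
    rwa [h3] at h2
  have hzj : ∀ j : Fin n ⊕ Fin n, Tendsto (fun t => z t j) atTop (𝓝 0) := by
    intro j
    obtain ⟨I, hIpos, hIb⟩ : ∃ I : ℝ, 0 < I ∧ ∀ t : ℝ, 0 ≤ t →
        (z t j)^2 ≤ I * (z1 t ⬝ᵥ (L *ᵥ z1 t) - 2*cc*(z1 t ⬝ᵥ z2 t) + (b + a*cc)*(z2 t ⬝ᵥ z2 t)) := by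
      cases j with
      | inl i =>
        refine ⟨2/lam, by positivity, fun t ht => ?_⟩
        have hlb := hVlb t ht
        have hsingle : (z1 t i) * (z1 t i) ≤ z1 t ⬝ᵥ z1 t :=
          Finset.single_le_sum (fun j' _ => mul_self_nonneg (z1 t j')) (Finset.mem_univ i)
        have hqq := myDotNonneg (z2 t)
        have hz : z t (Sum.inl i) = z1 t i := rfl
        rw [hz, pow_two]
        have hid : (2/lam) * ((lam/2) * (z1 t ⬝ᵥ z1 t)) = z1 t ⬝ᵥ z1 t := by
          field_simp
        have hmono := mul_le_mul_of_nonneg_left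
          (show (lam/2) * (z1 t ⬝ᵥ z1 t) ≤ (z1 t ⬝ᵥ (L *ᵥ z1 t) - 2*cc*(z1 t ⬝ᵥ z2 t) + (b + a*cc)*(z2 t ⬝ᵥ z2 t)) by nlinarith [mul_nonneg hb.le hqq])
          (show (0:ℝ) ≤ 2/lam by positivity)
        linarith
      | inr i =>
        refine ⟨2/b, by positivity, fun t ht => ?_⟩
        have hlb := hVlb t ht
        have hsingle : (z2 t i) * (z2 t i) ≤ z2 t ⬝ᵥ z2 t :=
          Finset.single_le_sum (fun j' _ => mul_self_nonneg (z2 t j')) (Finset.mem_univ i)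
        have hpp := myDotNonneg (z1 t)
        have hz : z t (Sum.inr i) = z2 t i := rfl
        rw [hz, pow_two]
        have hid : (2/b) * ((b/2) * (z2 t ⬝ᵥ z2 t)) = z2 t ⬝ᵥ z2 t := by
          field_simp
        have hmono := mul_le_mul_of_nonneg_left
          (show (b/2) * (z2 t ⬝ᵥ z2 t) ≤ (z1 t ⬝ᵥ (L *ᵥ z1 t) - 2*cc*(z1 t ⬝ᵥ z2 t) + (b + a*cc)*(z2 t ⬝ᵥ z2 t)) by nlinarith [mul_nonneg (le_of_lt hlam) hpp])
          (show (0:ℝ) ≤ 2/b by positivity)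
        linarith
    have hub : ∀ t : ℝ, 0 ≤ t →
        (z t j)^2 ≤ (I * (z1 0 ⬝ᵥ (L *ᵥ z1 0) - 2*cc*(z1 0 ⬝ᵥ z2 0) + (b + a*cc)*(z2 0 ⬝ᵥ z2 0))) * Real.exp (-γ * t) := by
      intro t ht
      have h1 := hIb t ht
      have h2 : (z1 t ⬝ᵥ (L *ᵥ z1 t) - 2*cc*(z1 t ⬝ᵥ z2 t) + (b + a*cc)*(z2 t ⬝ᵥ z2 t)) ≤ (z1 0 ⬝ᵥ (L *ᵥ z1 0) - 2*cc*(z1 0 ⬝ᵥ z2 0) + (b + a*cc)*(z2 0 ⬝ᵥ z2 0)) * Real.exp (-γ * t) := hdecay t ht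
      have h3 := mul_le_mul_of_nonneg_left h2 hIpos.le
      calc (z t j)^2 ≤ I * (z1 t ⬝ᵥ (L *ᵥ z1 t) - 2*cc*(z1 t ⬝ᵥ z2 t) + (b + a*cc)*(z2 t ⬝ᵥ z2 t)) := h1
        _ ≤ I * ((z1 0 ⬝ᵥ (L *ᵥ z1 0) - 2*cc*(z1 0 ⬝ᵥ z2 0) + (b + a*cc)*(z2 0 ⬝ᵥ z2 0)) * Real.exp (-γ * t)) := h3
        _ = (I * (z1 0 ⬝ᵥ (L *ᵥ z1 0) - 2*cc*(z1 0 ⬝ᵥ z2 0) + (b + a*cc)*(z2 0 ⬝ᵥ z2 0))) * Real.exp (-γ * t) := by ring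
    have hg : Tendsto (fun t : ℝ => (I * (z1 0 ⬝ᵥ (L *ᵥ z1 0) - 2*cc*(z1 0 ⬝ᵥ z2 0) + (b + a*cc)*(z2 0 ⬝ᵥ z2 0))) * Real.exp (-γ * t)) atTop (𝓝 0) := by
      have h := hexp0.const_mul (I * (z1 0 ⬝ᵥ (L *ᵥ z1 0) - 2*cc*(z1 0 ⬝ᵥ z2 0) + (b + a*cc)*(z2 0 ⬝ᵥ z2 0)))
      simpa using h
    have hsq : Tendsto (fun t => (z t j)^2) atTop (𝓝 0) :=
      squeeze_zero' (Filter.eventually_atTop.2 ⟨0, fun t _ => sq_nonneg _⟩)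
        (Filter.eventually_atTop.2 ⟨0, hub⟩) hg
    have habs : Tendsto (fun t => |z t j|) atTop (𝓝 0) := by
      have h := Filter.Tendsto.sqrt hsq
      simpa [Real.sqrt_sq_eq_abs] using h
    exact (tendsto_zero_iff_abs_tendsto_zero (fun t => z t j)).mpr
      habs
  have hC1ψ : ∀ t : ℝ, C1 *ᵥ ψ t + ωu = ωss := by
    intro t
    rw [hC1]
    have hsp : ψ t = Sum.elim (fun _ => ωavg * t) (fun i => (ωavg - ωu i)/b) := rfl
    rw [hsp, Matrix.fromCols_mulVec_sumElim]
    funext i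
    rw [hωss]
    simp only [Pi.add_apply, Matrix.neg_mulVec, Matrix.smul_mulVec, hLconst,
      smul_zero, neg_zero, Matrix.one_mulVec, Pi.zero_apply, zero_add, Pi.smul_apply,
      smul_eq_mul]
    field_simp
    ring
  have hC2ψ : ∀ t : ℝ, C2 *ᵥ ψ t = 0 := by
    intro t
    rw [hC2]
    have hsp : ψ t = Sum.elim (fun _ => ωavg * t) (fun i => (ωavg - ωu i)/b) := rfl
    rw [hsp, Matrix.fromCols_mulVec_sumElim, Matrix.neg_mulVec, hBtconst,
      Matrix.zero_mulVec]
    simp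
  have hxzψ : ∀ t : ℝ, x t = z t + ψ t := by
    intro t
    rw [hzdef]
    funext j
    simp
  have hωeq : ω = fun t => C1 *ᵥ z t + ωss := by
    funext t
    rw [hω t, hxzψ t, Matrix.mulVec_add, ← hC1ψ t]
    abel
  have hδeq : δ = fun t => C2 *ᵥ z t := by
    funext t
    rw [hδ t, hxzψ t, Matrix.mulVec_add, hC2ψ t, add_zero]
  have hmul : ∀ (k : ℕ) (M : Matrix (Fin k) (Fin n ⊕ Fin n) ℝ),
      Tendsto (fun t => M *ᵥ z t) atTop (𝓝 (0 : Fin k → ℝ)) := by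
    intro k M
    rw [tendsto_pi_nhds]
    intro i
    have h1 : Tendsto (fun t => ∑ j, M i j * z t j) atTop
        (𝓝 (∑ j : Fin n ⊕ Fin n, M i j * 0)) :=
      tendsto_finset_sum _ (fun j _ => (hzj j).const_mul (M i j))
    simpa [Matrix.mulVec, dotProduct] using h1
  constructor
  · rw [hωeq]
    have h := (hmul n C1).add (tendsto_const_nhds (x := ωss))
    simpa using h
  · rw [hδeq]
    exact hmul m C2
end

section
/- Writing x(t) = (x₁(t), x₂(t)) with x₁(t) ∈ ℝⁿ the vector of clock phases, the phase is the sum of a linearly growing term and a transient that tends to zero: x₁(t) − ω^avg t 𝟏 → 0 as t → ∞. -/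
open Matrix MeasureTheory Filter Topology

lemma lam_exists (n : ℕ) (m : ℕ) (hn : 2 ≤ n)
    (G : SimpleGraph (Fin n)) (hG : G.Connected)
    (src tgt : Fin m → Fin n)
    (hsurj : ∀ e ∈ G.edgeSet, ∃ l : Fin m, s(src l, tgt l) = e) :
    ∃ lam : ℝ, 0 < lam ∧ ∀ u : Fin n → ℝ, (∑ i, u i) = 0 →
      lam * (∑ i, (u i)^2) ≤ ∑ l, (u (src l) - u (tgt l))^2 := by
  classical
  set gq : (Fin n → ℝ) → ℝ := fun u => ∑ l, (u (src l) - u (tgt l))^2 with hgq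
  have gq_nonneg : ∀ u, 0 ≤ gq u := fun u => Finset.sum_nonneg (fun l _ => sq_nonneg _)
  have gq_scale : ∀ (c : ℝ) (u), gq (fun i => c * u i) = c^2 * gq u := by
    intro c u
    simp only [hgq, Finset.mul_sum]
    exact Finset.sum_congr rfl (fun l _ => by ring)
  -- constancy from connectivity
  have const_of_zero : ∀ u : Fin n → ℝ, gq u = 0 → ∀ i j, u i = u j := by
    intro u hu
    have hz : ∀ l, u (src l) = u (tgt l) := by
      intro l
      have := (Finset.sum_eq_zero_iff_of_nonneg (fun l _ => sq_nonneg (u (src l) - u (tgt l)))).mp hu l (Finset.mem_univ l)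
      have := pow_eq_zero_iff (n := 2) (by norm_num) |>.mp this
      linarith [sub_eq_zero.mp this]
    have step : ∀ i j : Fin n, G.Adj i j → u i = u j := by
      intro i j hij
      obtain ⟨l, hl⟩ := hsurj s(i, j) ((SimpleGraph.mem_edgeSet G).mpr hij)
      rcases Sym2.eq_iff.mp hl with ⟨h1, h2⟩ | ⟨h1, h2⟩
      · rw [← h1, ← h2]; exact hz l
      · rw [← h1, ← h2]; exact (hz l).symm
    intro i j
    obtain ⟨w⟩ := hG.preconnected i j
    induction w with
    | nil => rfl
    | cons h p ih => exact (step _ _ h).trans ih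
  -- compact set
  set K : Set (Fin n → ℝ) := {u | (∑ i, u i) = 0 ∧ (∑ i, (u i)^2) = 1} with hK
  have csum : Continuous fun u : Fin n → ℝ => ∑ i, u i := by fun_prop
  have csq : Continuous fun u : Fin n → ℝ => ∑ i, (u i)^2 := by fun_prop
  have cgq : Continuous gq := by
    simp only [hgq]; fun_prop
  have hKclosed : IsClosed K := by
    have : K = (fun u : Fin n → ℝ => ∑ i, u i) ⁻¹' {0} ∩ (fun u : Fin n → ℝ => ∑ i, (u i)^2) ⁻¹' {1} := by
      ext u; simp [hK]
    rw [this]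
    exact (isClosed_singleton.preimage csum).inter (isClosed_singleton.preimage csq)
  have hKbdd : Bornology.IsBounded K := by
    apply (Metric.isBounded_closedBall (x := (0 : Fin n → ℝ)) (r := 1)).subset
    intro u hu
    rw [Metric.mem_closedBall, dist_zero_right]
    rw [pi_norm_le_iff_of_nonneg (by norm_num)]
    intro i
    have h1 : (u i)^2 ≤ 1 := by
      rw [← hu.2]
      exact Finset.single_le_sum (fun j _ => sq_nonneg (u j)) (Finset.mem_univ i)
    have := (sq_le_one_iff_abs_le_one (u i)).mp h1
    simpa using this
  have hKcompact : IsCompact K := Metric.isCompact_of_isClosed_isBounded hKclosed hKbdd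
  have hKne : K.Nonempty := by
    have h0 : (0 : ℕ) < n := by omega
    have h1 : (1 : ℕ) < n := by omega
    set i0 : Fin n := ⟨0, h0⟩
    set i1 : Fin n := ⟨1, h1⟩
    have hne : i1 ≠ i0 := by simp [i0, i1, Fin.ext_iff]
    set c : ℝ := Real.sqrt 2⁻¹ with hc
    have hc2 : c^2 = 2⁻¹ := Real.sq_sqrt (by norm_num)
    refine ⟨fun i => if i = i0 then c else if i = i1 then -c else 0, ?_, ?_⟩
    · have : ∀ i, (if i = i0 then c else if i = i1 then -c else 0)
        = c * (if i = i0 then 1 else 0) + (-c) * (if i = i1 then 1 else 0) := by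
        intro i
        by_cases h : i = i0 <;> by_cases h' : i = i1
        · exact absurd (h'.symm.trans h) hne
        · rw [if_pos h, if_pos h, if_neg h']; ring
        · rw [if_neg h, if_neg h, if_pos h', if_pos h']; ring
        · rw [if_neg h, if_neg h, if_neg h', if_neg h']; ring
      simp only [this, Finset.sum_add_distrib, ← Finset.mul_sum]
      rw [Finset.sum_ite_eq' Finset.univ i0 (fun _ => (1:ℝ)),
          Finset.sum_ite_eq' Finset.univ i1 (fun _ => (1:ℝ))]
      simp
    · have : ∀ i, (if i = i0 then c else if i = i1 then -c else 0)^2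
        = c^2 * (if i = i0 then 1 else 0) + c^2 * (if i = i1 then 1 else 0) := by
        intro i
        by_cases h : i = i0 <;> by_cases h' : i = i1
        · exact absurd (h'.symm.trans h) hne
        · rw [if_pos h, if_pos h, if_neg h']; ring
        · rw [if_neg h, if_neg h, if_pos h', if_pos h']; ring
        · rw [if_neg h, if_neg h, if_neg h', if_neg h']; ring
      simp only [this, Finset.sum_add_distrib, ← Finset.mul_sum]
      rw [Finset.sum_ite_eq' Finset.univ i0 (fun _ => (1:ℝ)),
          Finset.sum_ite_eq' Finset.univ i1 (fun _ => (1:ℝ))]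
      simp [hc2]; norm_num
  obtain ⟨u0, hu0K, hmin⟩ := hKcompact.exists_isMinOn hKne cgq.continuousOn
  refine ⟨gq u0, ?_, ?_⟩
  · rcases lt_or_eq_of_le (gq_nonneg u0) with h | h
    · exact h
    · exfalso
      have hconst := const_of_zero u0 h.symm
      have : ∀ i, u0 i = 0 := by
        intro i
        have hsum : ∑ j, u0 j = 0 := hu0K.1
        have : ∑ j, u0 j = (n : ℝ) * u0 i := by
          rw [Finset.sum_congr rfl (fun j _ => hconst j i)]
          simp [Finset.sum_const, mul_comm]
        have hn0 : (n : ℝ) ≠ 0 := by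
          have : (0:ℝ) < (n:ℝ) := by
            have : 0 < n := by omega
            exact_mod_cast this
          linarith
        have h2 := hsum.symm.trans this
        exact (mul_eq_zero.mp h2.symm).resolve_left hn0
      have : ∑ j, (u0 j)^2 = 0 := Finset.sum_eq_zero (fun j _ => by rw [this j]; ring)
      rw [hu0K.2] at this
      norm_num at this
  · intro u husum
    by_cases hz : ∑ i, (u i)^2 = 0
    · rw [hz, mul_zero]; exact gq_nonneg u
    · have hpos : 0 < ∑ i, (u i)^2 :=
        lt_of_le_of_ne (Finset.sum_nonneg (fun i _ => sq_nonneg _)) (Ne.symm hz)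
      set r : ℝ := Real.sqrt (∑ i, (u i)^2) with hr
      have hrpos : 0 < r := Real.sqrt_pos.mpr hpos
      have hr2 : r^2 = ∑ i, (u i)^2 := Real.sq_sqrt hpos.le
      set wv : Fin n → ℝ := fun i => r⁻¹ * u i with hw
      have hwK : wv ∈ K := by
        constructor
        · simp only [hw, ← Finset.mul_sum, husum, mul_zero]
        · have : ∀ i, (wv i)^2 = r⁻¹^2 * (u i)^2 := fun i => by rw [hw]; ring
          simp only [this, ← Finset.mul_sum, ← hr2]
          field_simp
      have hle : gq u0 ≤ gq wv := hmin hwK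
      have hgw : gq wv = r⁻¹^2 * gq u := gq_scale r⁻¹ u
      rw [hgw] at hle
      have h2 : gq u0 * r^2 ≤ gq u := by
        have hrne : r ≠ 0 := ne_of_gt hrpos
        calc gq u0 * r^2 ≤ (r⁻¹^2 * gq u) * r^2 := by nlinarith [sq_nonneg r]
        _ = gq u := by field_simp
      rw [← hr2]
      linarith

set_option maxHeartbeats 1600000 in
theorem stmt13
    (n m : ℕ) (hn : 2 ≤ n)
    (G : SimpleGraph (Fin n)) (hG : G.Connected)
    (src tgt : Fin m → Fin n)
    (hadj : ∀ l, G.Adj (src l) (tgt l))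
    (hinj : ∀ l l' : Fin m, s(src l, tgt l) = s(src l', tgt l') → l = l')
    (hsurj : ∀ e ∈ G.edgeSet, ∃ l : Fin m, s(src l, tgt l) = e)
    (B : Matrix (Fin n) (Fin m) ℝ)
    (hB : ∀ i l, B i l = if i = src l then (1 : ℝ) else if i = tgt l then -1 else 0)
    (L : Matrix (Fin n) (Fin n) ℝ) (hL : L = B * Bᵀ)
    (a b : ℝ) (ha : 0 < a) (hb : 0 < b)
    (ωu : Fin n → ℝ)
    (A : Matrix (Fin n ⊕ Fin n) (Fin n ⊕ Fin n) ℝ)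
    (hA : A = Matrix.fromBlocks (-(a • L)) (b • (1 : Matrix (Fin n) (Fin n) ℝ)) (-L) 0)
    (B2 : Matrix (Fin n ⊕ Fin n) (Fin n) ℝ)
    (hB2 : B2 = Matrix.fromRows (1 : Matrix (Fin n) (Fin n) ℝ) 0)
    (C1 : Matrix (Fin n) (Fin n ⊕ Fin n) ℝ)
    (hC1 : C1 = Matrix.fromCols (-(a • L)) (b • (1 : Matrix (Fin n) (Fin n) ℝ)))
    (C2 : Matrix (Fin m) (Fin n ⊕ Fin n) ℝ)
    (hC2 : C2 = Matrix.fromCols (-Bᵀ) 0)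
    (x : ℝ → (Fin n ⊕ Fin n) → ℝ)
    (hx0 : x 0 = 0)
    (hx : ∀ t : ℝ, 0 ≤ t → HasDerivAt x (A *ᵥ x t + B2 *ᵥ ωu) t)
    (ω : ℝ → Fin n → ℝ) (hω : ∀ t, ω t = C1 *ᵥ x t + ωu)
    (δ : ℝ → Fin m → ℝ) (hδ : ∀ t, δ t = C2 *ᵥ x t)
    (ωavg : ℝ) (hωavg : ωavg = (1 / (n : ℝ)) * ∑ i, ωu i)
    (ωss : Fin n → ℝ) (hωss : ωss = fun _ => ωavg)
    :
    Tendsto (fun t : ℝ => fun i : Fin n => x t (Sum.inl i) - ωavg * t) atTop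
      (𝓝 0) := by
  classical
  have hnR : (0:ℝ) < (n:ℝ) := by
    have : 0 < n := by omega
    exact_mod_cast this
  -- basic matrix facts
  have mvapply : ∀ (M : Matrix (Fin n) (Fin n) ℝ) (u : Fin n → ℝ) (i : Fin n),
      (M *ᵥ u) i = ∑ j, M i j * u j := fun _ _ _ => rfl
  have hLentry : ∀ i j, L i j = ∑ l, B i l * B j l := by
    intro i j
    simp [hL, Matrix.mul_apply, Matrix.transpose_apply]
  have hBcol : ∀ l, ∑ i, B i l = 0 := by
    intro l
    have hne : src l ≠ tgt l := (hadj l).ne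
    have : ∀ i, B i l = (if i = src l then (1:ℝ) else 0) + (if i = tgt l then (-1:ℝ) else 0) := by
      intro i
      rw [hB]
      by_cases h : i = src l
      · subst h
        simp [hne]
      · by_cases h' : i = tgt l
        · subst h'
          simp [h]
        · simp [h, h']
    simp only [this, Finset.sum_add_distrib]
    rw [Finset.sum_ite_eq' Finset.univ (src l) (fun _ => (1:ℝ)),
        Finset.sum_ite_eq' Finset.univ (tgt l) (fun _ => (-1:ℝ))]
    simp
  have hLrow : ∀ i, ∑ j, L i j = 0 := by
    intro i
    simp only [hLentry]
    rw [Finset.sum_comm]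
    apply Finset.sum_eq_zero
    intro l _
    rw [← Finset.mul_sum, hBcol, mul_zero]
  have hLcol : ∀ j, ∑ i, L i j = 0 := by
    intro j
    simp only [hLentry]
    rw [Finset.sum_comm]
    apply Finset.sum_eq_zero
    intro l _
    rw [← Finset.sum_mul, hBcol, zero_mul]
  have hLsum : ∀ z : Fin n → ℝ, ∑ i, (L *ᵥ z) i = 0 := by
    intro z
    simp only [mvapply]
    rw [Finset.sum_comm]
    apply Finset.sum_eq_zero
    intro j _
    rw [← Finset.sum_mul, hLcol, zero_mul]
  -- gB and quadratic identity
  set gB : (Fin n → ℝ) → Fin m → ℝ := fun u l => ∑ i, B i l * u i with hgB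
  have gBeq : ∀ (u : Fin n → ℝ) l, gB u l = u (src l) - u (tgt l) := by
    intro u l
    have hne : src l ≠ tgt l := (hadj l).ne
    have : ∀ i, B i l * u i = (if i = src l then u i else 0) + (if i = tgt l then -(u i) else 0) := by
      intro i
      rw [hB]
      by_cases h : i = src l
      · subst h
        simp [hne]
      · by_cases h' : i = tgt l
        · subst h'
          simp [h]
        · simp [h, h']
    simp only [hgB, this, Finset.sum_add_distrib]
    rw [Finset.sum_ite_eq' Finset.univ (src l) (fun i => u i),
        Finset.sum_ite_eq' Finset.univ (tgt l) (fun i => -(u i))]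
    simp [sub_eq_add_neg]
  have quadId : ∀ u z : Fin n → ℝ, ∑ i, u i * (L *ᵥ z) i = ∑ l, gB u l * gB z l := by
    intro u z
    have lhs : ∀ i, u i * (L *ᵥ z) i = ∑ j, ∑ l, (B i l * u i) * (B j l * z j) := by
      intro i
      rw [mvapply, Finset.mul_sum]
      apply Finset.sum_congr rfl
      intro j _
      rw [hLentry, Finset.sum_mul, Finset.mul_sum]
      apply Finset.sum_congr rfl
      intro l _
      ring
    have rhs : ∀ l, gB u l * gB z l = ∑ i, ∑ j, (B i l * u i) * (B j l * z j) := by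
      intro l
      rw [hgB]
      simp only
      rw [Finset.sum_mul_sum]
    simp only [lhs, rhs]
    exact Eq.trans (Finset.sum_congr rfl fun i _ => Finset.sum_comm) Finset.sum_comm
  -- block formulas
  have hAinl : ∀ (u : (Fin n ⊕ Fin n) → ℝ) (i : Fin n),
      (A *ᵥ u) (Sum.inl i) = -(a * (L *ᵥ fun j => u (Sum.inl j)) i) + b * u (Sum.inr i) := by
    intro u i
    have h : (A *ᵥ u) (Sum.inl i) = ∑ j, A (Sum.inl i) (Sum.inl j) * u (Sum.inl j)
        + ∑ j, A (Sum.inl i) (Sum.inr j) * u (Sum.inr j) := by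
      show ∑ k, A (Sum.inl i) k * u k = _
      rw [Fintype.sum_sum_type]
    rw [h]
    simp only [hA, Matrix.fromBlocks_apply₁₁, Matrix.fromBlocks_apply₁₂, Matrix.neg_apply,
      Matrix.smul_apply, smul_eq_mul, Matrix.one_apply, mul_ite, mul_one, mul_zero, ite_mul,
      zero_mul]
    rw [Finset.sum_ite_eq Finset.univ i (fun j => b * u (Sum.inr j))]
    simp only [Finset.mem_univ, if_true]
    rw [mvapply, Finset.mul_sum, ← Finset.sum_neg_distrib]
    congr 1
    exact Finset.sum_congr rfl fun j _ => by ring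
  have hAinr : ∀ (u : (Fin n ⊕ Fin n) → ℝ) (i : Fin n),
      (A *ᵥ u) (Sum.inr i) = -((L *ᵥ fun j => u (Sum.inl j)) i) := by
    intro u i
    have h : (A *ᵥ u) (Sum.inr i) = ∑ j, A (Sum.inr i) (Sum.inl j) * u (Sum.inl j)
        + ∑ j, A (Sum.inr i) (Sum.inr j) * u (Sum.inr j) := by
      show ∑ k, A (Sum.inr i) k * u k = _
      rw [Fintype.sum_sum_type]
    rw [h]
    simp only [hA, Matrix.fromBlocks_apply₂₁, Matrix.fromBlocks_apply₂₂, Matrix.neg_apply,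
      Matrix.zero_apply, zero_mul, Finset.sum_const_zero, add_zero]
    rw [mvapply, ← Finset.sum_neg_distrib]
    exact Finset.sum_congr rfl fun j _ => by ring
  have hB2inl : ∀ i, (B2 *ᵥ ωu) (Sum.inl i) = ωu i := by
    intro i
    show ∑ j, B2 (Sum.inl i) j * ωu j = ωu i
    simp only [hB2, Matrix.fromRows_apply_inl, Matrix.one_apply, ite_mul, one_mul, zero_mul]
    rw [Finset.sum_ite_eq Finset.univ i (fun j => ωu j)]
    simp
  have hB2inr : ∀ i, (B2 *ᵥ ωu) (Sum.inr i) = 0 := by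
    intro i
    show ∑ j, B2 (Sum.inr i) j * ωu j = 0
    simp [hB2]
  -- component derivatives of x
  have hxc : ∀ t : ℝ, 0 ≤ t → ∀ k, HasDerivAt (fun s => x s k) ((A *ᵥ x t + B2 *ᵥ ωu) k) t := by
    intro t ht k
    exact (ContinuousLinearMap.proj (R := ℝ) (φ := fun _ : Fin n ⊕ Fin n => ℝ)
      k).hasFDerivAt.comp_hasDerivAt t (hx t ht)
  -- shifted variables
  obtain ⟨w, hw⟩ : ∃ w : Fin n → ℝ, w = fun i => ωu i - ωavg := ⟨_, rfl⟩
  have hwsum : ∑ i, w i = 0 := by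
    subst hw
    simp only [Finset.sum_sub_distrib, Finset.sum_const, Finset.card_univ, Fintype.card_fin,
      nsmul_eq_mul]
    rw [hωavg]
    field_simp
    ring
  obtain ⟨y, hy⟩ : ∃ y : ℝ → Fin n → ℝ, y = fun t i => x t (Sum.inl i) - ωavg * t := ⟨_, rfl⟩
  obtain ⟨y2, hy2⟩ : ∃ y2 : ℝ → Fin n → ℝ, y2 = fun t i => x t (Sum.inr i) + w i / b := ⟨_, rfl⟩
  obtain ⟨v, hv⟩ : ∃ v : ℝ → Fin n → ℝ, v = fun t i => -(a * (L *ᵥ y t) i) + b * y2 t i := ⟨_, rfl⟩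
  have hLy : ∀ t, L *ᵥ y t = L *ᵥ (fun j => x t (Sum.inl j)) := by
    intro t; funext i
    rw [mvapply, mvapply]
    have h1 : ∀ j, L i j * y t j = L i j * x t (Sum.inl j) - (ωavg * t) * L i j := by
      intro j; rw [hy]; ring
    rw [Finset.sum_congr rfl (fun j _ => h1 j), Finset.sum_sub_distrib, ← Finset.mul_sum,
      hLrow i, mul_zero, sub_zero]
  have hdy : ∀ t : ℝ, 0 ≤ t → ∀ i, HasDerivAt (fun s => y s i) (v t i) t := by
    intro t ht i
    have hlin : HasDerivAt (fun s : ℝ => ωavg * s) ωavg t := by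
      simpa using (hasDerivAt_id t).const_mul ωavg
    have h2 : HasDerivAt (fun s => x s (Sum.inl i) - ωavg * s)
        ((A *ᵥ x t + B2 *ᵥ ωu) (Sum.inl i) - ωavg) t :=
      (hxc t ht (Sum.inl i)).sub hlin
    have h3 : (A *ᵥ x t + B2 *ᵥ ωu) (Sum.inl i) - ωavg = v t i := by
      rw [Pi.add_apply, hAinl, hB2inl, hv]
      simp only [hy2, hLy]
      have : b * (x t (Sum.inr i) + w i / b) = b * x t (Sum.inr i) + w i := by
        field_simp
      rw [this, hw]
      ring
    have hfun : (fun s => y s i) = fun s => x s (Sum.inl i) - ωavg * s := by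
      funext s; rw [hy]
    rw [hfun, ← h3]
    exact h2
  have hdy2 : ∀ t : ℝ, 0 ≤ t → ∀ i, HasDerivAt (fun s => y2 s i) (-((L *ᵥ y t) i)) t := by
    intro t ht i
    have h2 : HasDerivAt (fun s => x s (Sum.inr i) + w i / b)
        ((A *ᵥ x t + B2 *ᵥ ωu) (Sum.inr i)) t := by
      simpa using (hxc t ht (Sum.inr i)).add_const (w i / b)
    have h3 : (A *ᵥ x t + B2 *ᵥ ωu) (Sum.inr i) = -((L *ᵥ y t) i) := by
      rw [Pi.add_apply, hAinr, hB2inr, hLy, add_zero]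
    have hfun : (fun s => y2 s i) = fun s => x s (Sum.inr i) + w i / b := by
      funext s; rw [hy2]
    rw [hfun, ← h3]
    exact h2
  have hdv : ∀ t : ℝ, 0 ≤ t → ∀ i,
      HasDerivAt (fun s => v s i) (-(a * (L *ᵥ v t) i) - b * ((L *ᵥ y t) i)) t := by
    intro t ht i
    have hsum : HasDerivAt (fun s => ∑ j, L i j * y s j) (∑ j, L i j * v t j) t :=
      HasDerivAt.fun_sum (fun j _ => (hdy t ht j).const_mul (L i j))
    have h2 : HasDerivAt (fun s => -(a * ∑ j, L i j * y s j) + b * y2 s i)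
        (-(a * ∑ j, L i j * v t j) + b * -((L *ᵥ y t) i)) t :=
      ((hsum.const_mul a).neg).add ((hdy2 t ht i).const_mul b)
    have h4 : (fun s => v s i) = fun s => -(a * ∑ j, L i j * y s j) + b * y2 s i := by
      funext s
      rw [hv]
      simp only [mvapply]
    rw [h4]
    convert h2 using 1
    rw [mvapply]
    ring
  have hx00 : ∀ k, x 0 k = 0 := fun k => by rw [hx0]; rfl
  -- sum invariants
  have ssum2 : ∀ t : ℝ, 0 ≤ t → ∑ i, y2 t i = 0 := by
    have hder : ∀ s : ℝ, 0 ≤ s → HasDerivAt (fun r => ∑ i, y2 r i) 0 s := by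
      intro s hs
      have h1 := HasDerivAt.fun_sum (fun i (_ : i ∈ Finset.univ) => hdy2 s hs i)
      convert h1 using 1
      · rfl
      · rfl
      rw [Finset.sum_neg_distrib, hLsum (y s), neg_zero]
    have h0 : ∑ i, y2 0 i = 0 := by
      rw [hy2]
      simp only [hx00, zero_add]
      rw [← Finset.sum_div, hwsum, zero_div]
    intro t ht
    have := constant_of_has_deriv_right_zero (f := fun r => ∑ i, y2 r i) (a := 0) (b := t)
      (fun s hs => ((hder s hs.1).continuousAt).continuousWithinAt)
      (fun s hs => (hder s hs.1).hasDerivWithinAt)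
      t (Set.mem_Icc.mpr ⟨ht, le_refl t⟩)
    exact this.trans h0
  have ssumv : ∀ t : ℝ, 0 ≤ t → ∑ i, v t i = 0 := by
    intro t ht
    have h1 : ∑ i, v t i = -(a * ∑ i, (L *ᵥ y t) i) + b * ∑ i, y2 t i := by
      simp only [hv]
      rw [Finset.sum_add_distrib, Finset.sum_neg_distrib, ← Finset.mul_sum, ← Finset.mul_sum]
    rw [h1, hLsum (y t), ssum2 t ht]
    ring
  have ssumy : ∀ t : ℝ, 0 ≤ t → ∑ i, y t i = 0 := by
    have hder : ∀ s : ℝ, 0 ≤ s → HasDerivAt (fun r => ∑ i, y r i) 0 s := by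
      intro s hs
      have h1 := HasDerivAt.fun_sum (fun i (_ : i ∈ Finset.univ) => hdy s hs i)
      convert h1 using 1
      · rfl
      · rfl
      rw [ssumv s hs]
    have h0 : ∑ i, y 0 i = 0 := by
      rw [hy]
      simp [hx00]
    intro t ht
    have := constant_of_has_deriv_right_zero (f := fun r => ∑ i, y r i) (a := 0) (b := t)
      (fun s hs => ((hder s hs.1).continuousAt).continuousWithinAt)
      (fun s hs => (hder s hs.1).hasDerivWithinAt)
      t (Set.mem_Icc.mpr ⟨ht, le_refl t⟩)
    exact this.trans h0
  -- scalar quantities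
  obtain ⟨P, hP⟩ : ∃ P : ℝ → ℝ, P = fun t => ∑ i, (v t i)^2 := ⟨_, rfl⟩
  obtain ⟨Q, hQ⟩ : ∃ Q : ℝ → ℝ, Q = fun t => ∑ l, (gB (y t) l)^2 := ⟨_, rfl⟩
  obtain ⟨Rr, hRr⟩ : ∃ Rr : ℝ → ℝ, Rr = fun t => ∑ i, y t i * v t i := ⟨_, rfl⟩
  obtain ⟨Sf, hSf⟩ : ∃ Sf : ℝ → ℝ, Sf = fun t => ∑ l, gB (y t) l * gB (v t) l := ⟨_, rfl⟩
  obtain ⟨qv, hqv⟩ : ∃ qv : ℝ → ℝ, qv = fun t => ∑ l, (gB (v t) l)^2 := ⟨_, rfl⟩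
  obtain ⟨Ysq, hYsq⟩ : ∃ Ysq : ℝ → ℝ, Ysq = fun t => ∑ i, (y t i)^2 := ⟨_, rfl⟩
  have hvLv : ∀ t, ∑ i, v t i * (L *ᵥ v t) i = qv t := by
    intro t; rw [quadId, hqv]
    exact Finset.sum_congr rfl fun l _ => by ring
  have hvLy : ∀ t, ∑ i, v t i * (L *ᵥ y t) i = Sf t := by
    intro t; rw [quadId, hSf]
    exact Finset.sum_congr rfl fun l _ => by ring
  have hyLv : ∀ t, ∑ i, y t i * (L *ᵥ v t) i = Sf t := by
    intro t; rw [quadId, hSf]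
  have hyLy : ∀ t, ∑ i, y t i * (L *ᵥ y t) i = Q t := by
    intro t; rw [quadId, hQ]
    exact Finset.sum_congr rfl fun l _ => by ring
  have hdg : ∀ t : ℝ, 0 ≤ t → ∀ l, HasDerivAt (fun s => gB (y s) l) (gB (v t) l) t := by
    intro t ht l
    exact HasDerivAt.fun_sum (fun i _ => (hdy t ht i).const_mul (B i l))
  -- derivatives of scalar quantities
  have hdP : ∀ t : ℝ, 0 ≤ t → HasDerivAt P (-(2*a*qv t) - 2*b*Sf t) t := by
    intro t ht
    rw [hP]
    have h1 := HasDerivAt.fun_sum (fun i (_ : i ∈ Finset.univ) => (hdv t ht i).pow 2)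
    convert h1 using 1
    · rfl
    · rfl
    · rfl
    push_cast
    have h2 : ∀ i : Fin n, (2:ℝ) * v t i ^ (2-1) * (-(a * (L *ᵥ v t) i) - b * ((L *ᵥ y t) i))
        = (-(2*a)) * (v t i * (L *ᵥ v t) i) + (-(2*b)) * (v t i * (L *ᵥ y t) i) := by
      intro i; ring
    rw [Finset.sum_congr rfl (fun i _ => h2 i), Finset.sum_add_distrib,
      ← Finset.mul_sum, ← Finset.mul_sum, hvLv, hvLy]
    ring
  have hdQ : ∀ t : ℝ, 0 ≤ t → HasDerivAt Q (2*Sf t) t := by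
    intro t ht
    rw [hQ]
    have h1 := HasDerivAt.fun_sum (fun l (_ : l ∈ Finset.univ) => (hdg t ht l).pow 2)
    convert h1 using 1
    · rfl
    · rfl
    · rfl
    push_cast
    have h2 : ∀ l : Fin m, (2:ℝ) * gB (y t) l ^ (2-1) * gB (v t) l
        = 2 * (gB (y t) l * gB (v t) l) := by intro l; ring
    rw [Finset.sum_congr rfl (fun l _ => h2 l), ← Finset.mul_sum, hSf]
  have hdR : ∀ t : ℝ, 0 ≤ t → HasDerivAt Rr (P t - a*Sf t - b*Q t) t := by
    intro t ht
    rw [hRr]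
    have h1 := HasDerivAt.fun_sum (fun i (_ : i ∈ Finset.univ) => (hdy t ht i).mul (hdv t ht i))
    convert h1 using 1
    · rfl
    · rfl
    · rfl
    have h2 : ∀ i : Fin n, v t i * v t i + y t i * (-(a * (L *ᵥ v t) i) - b * ((L *ᵥ y t) i))
        = (v t i)^2 + ((-a) * (y t i * (L *ᵥ v t) i) + (-b) * (y t i * (L *ᵥ y t) i)) := by
      intro i; ring
    rw [Finset.sum_congr rfl (fun i _ => h2 i), Finset.sum_add_distrib, Finset.sum_add_distrib,
      ← Finset.mul_sum, ← Finset.mul_sum, hyLv, hyLy]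
    have h3 : ∑ i, (v t i)^2 = P t := by rw [hP]
    rw [h3]
    ring
  -- spectral gap
  obtain ⟨lam, hlampos, hlamsp⟩ := lam_exists n m hn G hG src tgt hsurj
  have hQlow : ∀ t : ℝ, 0 ≤ t → lam * Ysq t ≤ Q t := by
    intro t ht
    have h := hlamsp (y t) (ssumy t ht)
    have hQt : Q t = ∑ l, (y t (src l) - y t (tgt l))^2 := by
      rw [hQ]
      exact Finset.sum_congr rfl fun l _ => by rw [gBeq]
    rw [hQt, hYsq]
    exact h
  have hqvlow : ∀ t : ℝ, 0 ≤ t → lam * P t ≤ qv t := by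
    intro t ht
    have h := hlamsp (v t) (ssumv t ht)
    have hqvt : qv t = ∑ l, (v t (src l) - v t (tgt l))^2 := by
      rw [hqv]
      exact Finset.sum_congr rfl fun l _ => by rw [gBeq]
    rw [hqvt, hP]
    exact h
  have hPnn : ∀ t, 0 ≤ P t := fun t => by rw [hP]; exact Finset.sum_nonneg fun i _ => sq_nonneg _
  have hQnn : ∀ t, 0 ≤ Q t := fun t => by rw [hQ]; exact Finset.sum_nonneg fun l _ => sq_nonneg _
  have hqvnn : ∀ t, 0 ≤ qv t := fun t => by
    rw [hqv]; exact Finset.sum_nonneg fun l _ => sq_nonneg _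
  have hYnn : ∀ t, 0 ≤ Ysq t := fun t => by
    rw [hYsq]; exact Finset.sum_nonneg fun i _ => sq_nonneg _
  -- choice of ε
  have hden : (0:ℝ) < a^2*lam + 2*b := by positivity
  obtain ⟨ε, hε⟩ : ∃ e : ℝ, e = min (min (1/2) (b*lam/2)) ((a*b*lam)/(a^2*lam + 2*b)) := ⟨_, rfl⟩
  have hεpos : 0 < ε := by
    rw [hε]
    exact lt_min (lt_min (by norm_num) (by positivity)) (by positivity)
  have hε1 : ε ≤ 1/2 := by rw [hε]; exact le_trans (min_le_left _ _) (min_le_left _ _)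
  have hε2 : ε ≤ b*lam/2 := by rw [hε]; exact le_trans (min_le_left _ _) (min_le_right _ _)
  have hε3 : ε * (a^2*lam + 2*b) ≤ a*b*lam := by
    have h := min_le_right (min (1/2) (b*lam/2)) ((a*b*lam)/(a^2*lam + 2*b))
    rw [← hε] at h
    exact (le_div_iff₀ hden).mp h
  -- Lyapunov function
  obtain ⟨W, hW⟩ : ∃ W : ℝ → ℝ, W = fun t => (1/2)*P t + (b/2)*Q t + ε*Rr t := ⟨_, rfl⟩
  obtain ⟨W', hW'⟩ : ∃ W' : ℝ → ℝ,
      W' = fun t => -(a*qv t) + ε*P t - ε*a*Sf t - ε*b*Q t := ⟨_, rfl⟩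
  have hdW : ∀ t : ℝ, 0 ≤ t → HasDerivAt W (W' t) t := by
    intro t ht
    rw [hW, hW']
    have h := (((hdP t ht).const_mul (1/2)).add ((hdQ t ht).const_mul (b/2))).add
      ((hdR t ht).const_mul ε)
    convert h using 1
    · rfl
    · rfl
    · rfl
    ring
  -- Young-type bounds
  have hstar : ∀ t, -(2*a*b*ε)*Sf t ≤ ε*b^2*Q t + ε*a^2*qv t := by
    intro t
    have e1 : ε*b^2*Q t + ε*a^2*qv t
        = ∑ l, (ε*b^2*(gB (y t) l)^2 + ε*a^2*(gB (v t) l)^2) := by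
      rw [hQ, hqv, Finset.mul_sum, Finset.mul_sum, ← Finset.sum_add_distrib]
    have e2 : -(2*a*b*ε)*Sf t = ∑ l, (-(2*a*b*ε)*(gB (y t) l * gB (v t) l)) := by
      rw [hSf, Finset.mul_sum]
    rw [e1, e2]
    exact Finset.sum_le_sum fun l _ => by
      nlinarith [mul_nonneg hεpos.le (sq_nonneg (b*gB (y t) l + a*gB (v t) l))]
  have hRbound : ∀ t, -(Ysq t + P t) ≤ 2 * Rr t ∧ 2 * Rr t ≤ Ysq t + P t := by
    intro t
    have hsum : Ysq t + P t = ∑ i, ((y t i)^2 + (v t i)^2) := by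
      rw [hYsq, hP, ← Finset.sum_add_distrib]
    have hR2 : 2 * Rr t = ∑ i, 2 * (y t i * v t i) := by rw [hRr, Finset.mul_sum]
    constructor
    · rw [hR2, hsum, ← Finset.sum_neg_distrib]
      exact Finset.sum_le_sum fun i _ => by nlinarith [sq_nonneg (y t i + v t i)]
    · rw [hR2, hsum]
      exact Finset.sum_le_sum fun i _ => by nlinarith [sq_nonneg (y t i - v t i)]
  -- decay of W'
  have hstep : ∀ t : ℝ, 0 ≤ t → 2*b*W' t ≤ -(a*b*lam)*P t - ε*b^2*Q t := by
    intro t ht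
    have eA : 2*b*W' t = -(2*a*b)*qv t + 2*b*ε*P t + (-(2*a*b*ε))*Sf t - 2*ε*b^2*Q t := by
      rw [hW']; ring
    have hc : 0 ≤ 2*a*b - ε*a^2 := by
      nlinarith [hε3, hlampos, mul_pos (mul_pos ha hb) hlampos, mul_pos hb hεpos]
    have h8 : (2*a*b - ε*a^2)*(lam*P t) ≤ (2*a*b - ε*a^2)*qv t :=
      mul_le_mul_of_nonneg_left (hqvlow t ht) hc
    have h9 : ε*(a^2*lam + 2*b)*P t ≤ a*b*lam*P t :=
      mul_le_mul_of_nonneg_right hε3 (hPnn t)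
    have h10 := hstar t
    nlinarith [eA, h8, h9, h10]
  -- upper and lower bounds on W
  have hWub : ∀ t : ℝ, 0 ≤ t → 2*b*W t ≤ (3*b/2)*P t + (3*b^2/2)*Q t := by
    intro t ht
    have e : 2*b*W t = b*P t + b^2*Q t + b*ε*(2*Rr t) := by rw [hW]; ring
    have h1 : b*ε*(2*Rr t) ≤ b*ε*(Ysq t + P t) :=
      mul_le_mul_of_nonneg_left (hRbound t).2 (by positivity)
    have h2 : 0 ≤ b*((b*lam/2 - ε)*Ysq t) :=
      mul_nonneg hb.le (mul_nonneg (by linarith) (hYnn t))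
    have h3 : 0 ≤ (b^2/2)*(Q t - lam*Ysq t) :=
      mul_nonneg (by positivity) (by linarith [hQlow t ht])
    have h4 : 0 ≤ b*((1/2 - ε)*P t) :=
      mul_nonneg hb.le (mul_nonneg (by linarith) (hPnn t))
    nlinarith [e, h1, h2, h3, h4]
  have hWlb : ∀ t : ℝ, 0 ≤ t → (b/2)*P t + (b^2/2)*Q t ≤ 2*b*W t := by
    intro t ht
    have e : 2*b*W t = b*P t + b^2*Q t + b*ε*(2*Rr t) := by rw [hW]; ring
    have h1 : b*ε*(-(Ysq t + P t)) ≤ b*ε*(2*Rr t) :=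
      mul_le_mul_of_nonneg_left (hRbound t).1 (by positivity)
    have h2 : 0 ≤ b*((b*lam/2 - ε)*Ysq t) :=
      mul_nonneg hb.le (mul_nonneg (by linarith) (hYnn t))
    have h3 : 0 ≤ (b^2/2)*(Q t - lam*Ysq t) :=
      mul_nonneg (by positivity) (by linarith [hQlow t ht])
    have h4 : 0 ≤ b*((1/2 - ε)*P t) :=
      mul_nonneg hb.le (mul_nonneg (by linarith) (hPnn t))
    nlinarith [e, h1, h2, h3, h4]
  have hWnn : ∀ t : ℝ, 0 ≤ t → 0 ≤ W t := by
    intro t ht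
    nlinarith [hWlb t ht, hPnn t, hQnn t, hb, mul_pos hb hb]
  -- κ
  obtain ⟨κ, hκ⟩ : ∃ k : ℝ, k = min (2*a*lam/3) (2*ε/3) := ⟨_, rfl⟩
  have hκpos : 0 < κ := by rw [hκ]; exact lt_min (by positivity) (by positivity)
  have hκ1 : κ*(3*b/2) ≤ a*b*lam := by
    have h := min_le_left (2*a*lam/3) (2*ε/3)
    rw [← hκ] at h
    nlinarith [mul_le_mul_of_nonneg_right h (show (0:ℝ) ≤ 3*b/2 by positivity)]
  have hκ2 : κ*(3*b^2/2) ≤ ε*b^2 := by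
    have h := min_le_right (2*a*lam/3) (2*ε/3)
    rw [← hκ] at h
    nlinarith [mul_le_mul_of_nonneg_right h (show (0:ℝ) ≤ 3*b^2/2 by positivity)]
  have hdec : ∀ t : ℝ, 0 ≤ t → W' t ≤ -κ * W t := by
    intro t ht
    have h2 : κ*(2*b*W t) ≤ a*b*lam*P t + ε*b^2*Q t := by
      have hm := mul_le_mul_of_nonneg_left (hWub t ht) hκpos.le
      have hm1 := mul_le_mul_of_nonneg_right hκ1 (hPnn t)
      have hm2 := mul_le_mul_of_nonneg_right hκ2 (hQnn t)
      nlinarith [hm, hm1, hm2]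
    have h3 : 2*b*W' t ≤ 2*b*(-κ*W t) := by
      have e : 2*b*(-κ*W t) = -(κ*(2*b*W t)) := by ring
      linarith [hstep t ht, h2, e.le, e.ge]
    exact (mul_le_mul_iff_right₀ (show (0:ℝ) < 2*b by positivity)).mp h3
  -- Gronwall
  obtain ⟨F, hF⟩ : ∃ F : ℝ → ℝ, F = fun t => Real.exp (κ*t) * W t := ⟨_, rfl⟩
  have hdF : ∀ t : ℝ, 0 ≤ t → HasDerivAt F (Real.exp (κ*t)*(κ*W t + W' t)) t := by
    intro t ht
    have h1 : HasDerivAt (fun s : ℝ => κ*s) κ t := by simpa using (hasDerivAt_id t).const_mul κ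
    have he : HasDerivAt (fun s : ℝ => Real.exp (κ*s)) (κ * Real.exp (κ*t)) t := by
      exact ((Real.hasDerivAt_exp (κ*t)).comp t h1).congr_deriv (mul_comm _ _)
    have h2 := he.mul (hdW t ht)
    rw [hF]
    convert h2 using 1
    · rfl
    · rfl
    · rfl
    ring
  have hFanti : AntitoneOn F (Set.Ici 0) := by
    apply antitoneOn_of_deriv_nonpos (convex_Ici 0)
    · exact fun s hs => ((hdF s hs).continuousAt).continuousWithinAt
    · intro s hs
      rw [interior_Ici] at hs
      exact ((hdF s (le_of_lt hs)).differentiableAt).differentiableWithinAt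
    · intro s hs
      rw [interior_Ici] at hs
      rw [(hdF s (le_of_lt hs)).deriv]
      apply mul_nonpos_iff.mpr
      exact Or.inl ⟨(Real.exp_pos _).le, by linarith [hdec s (le_of_lt hs)]⟩
  have hWdecay : ∀ t : ℝ, 0 ≤ t → W t ≤ W 0 / Real.exp (κ*t) := by
    intro t ht
    have h := hFanti (Set.mem_Ici.mpr (le_refl (0:ℝ))) (Set.mem_Ici.mpr ht) ht
    rw [hF] at h
    simp only [mul_zero, Real.exp_zero, one_mul] at h
    rw [le_div_iff₀ (Real.exp_pos _)]
    linarith [h]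
  -- final bound
  obtain ⟨C, hC⟩ : ∃ C : ℝ, C = 4*(W 0)/(b*lam) := ⟨_, rfl⟩
  have hfin : ∀ t : ℝ, 0 ≤ t → Ysq t ≤ C * Real.exp (-(κ*t)) := by
    intro t ht
    have h1 : (b^2*lam/2) * Ysq t ≤ 2*b*(W 0 / Real.exp (κ*t)) := by
      have ha1 := hQlow t ht
      have ha2 := hWlb t ht
      have ha3 := mul_le_mul_of_nonneg_left (hWdecay t ht) (show (0:ℝ) ≤ 2*b by positivity)
      nlinarith [hPnn t, hb, mul_pos hb hb, mul_le_mul_of_nonneg_left ha1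
        (show (0:ℝ) ≤ b^2/2 by positivity)]
    rw [Real.exp_neg]
    have hEpos : 0 < Real.exp (κ*t) := Real.exp_pos _
    have key : (b^2*lam/2) * (C * (Real.exp (κ*t))⁻¹) = 2*b*(W 0/Real.exp (κ*t)) := by
      rw [hC]
      field_simp
      ring
    have := key ▸ h1
    exact (mul_le_mul_iff_right₀ (show (0:ℝ) < b^2*lam/2 by positivity)).mp (by rw [key]; exact h1)
  have hCnn : 0 ≤ C := by
    rw [hC]
    apply div_nonneg _ (by positivity)
    linarith [hWnn 0 (le_refl (0:ℝ))]
  -- conclude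
  rw [show (fun t : ℝ => fun i : Fin n => x t (Sum.inl i) - ωavg * t) = y from hy.symm]
  apply squeeze_zero_norm' (a := fun t => Real.sqrt (C * Real.exp (-(κ*t))))
  · filter_upwards [eventually_ge_atTop (0:ℝ)] with t ht
    rw [pi_norm_le_iff_of_nonneg (Real.sqrt_nonneg _)]
    intro i
    rw [Real.norm_eq_abs, ← Real.sqrt_sq_eq_abs]
    apply Real.sqrt_le_sqrt
    have h1 : (y t i)^2 ≤ Ysq t := by
      rw [hYsq]
      exact Finset.single_le_sum (fun j _ => sq_nonneg (y t j)) (Finset.mem_univ i)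
    exact h1.trans (hfin t ht)
  · have h1 : Tendsto (fun t : ℝ => κ*t) atTop atTop :=
      Tendsto.const_mul_atTop hκpos tendsto_id
    have h2 : Tendsto (fun t : ℝ => -(κ*t)) atTop atBot :=
      tendsto_neg_atTop_atBot.comp h1
    have h3 : Tendsto (fun t : ℝ => Real.exp (-(κ*t))) atTop (𝓝 0) :=
      Real.tendsto_exp_atBot.comp h2
    have h4 : Tendsto (fun t : ℝ => C * Real.exp (-(κ*t))) atTop (𝓝 0) := by
      simpa using h3.const_mul C
    have h5 := (Real.continuous_sqrt.tendsto 0).comp h4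
    rw [Real.sqrt_zero] at h5
    exact h5
end
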